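/- arXiv:1609.03492 — 7 statements merged into one kernel-verified Lean document; each statement's English description precedes it below -/
import Mathlib

section
/- An abelian subgroup H of the additive group structure on pairs acting on V = GF(q)^{2n}, namely the group G = ⟨-I⟩ × B where B = { [[I,0],[Q,I]] : Q symmetric n×n over GF(q) }, has exactly q^n orbits on V = GF(q)^{2n} (acting by right multiplication). -/
open Matrix

lemma exists_symm_vecMul {n : ℕ} {F : Type} [Field F] (y : Fin n → F) (hy : y ≠ 0)
    (t : Fin n → F) :
    ∃ Q : Matrix (Fin n) (Fin n) F, Q.IsSymm ∧ y ᵥ* Q = t := by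
  classical
  obtain ⟨i0, hi0⟩ : ∃ i, y i ≠ 0 := by
    by_contra h; push_neg at h; exact hy (funext h)
  set s : F := ∑ i, y i * t i with hs
  refine ⟨Matrix.of fun i j =>
    (y i0)⁻¹ * ((if i = i0 then (1:F) else 0) * t j + t i * (if j = i0 then 1 else 0))
    + (-s * ((y i0)⁻¹)^2) * ((if i = i0 then (1:F) else 0) * (if j = i0 then 1 else 0)),
    ?_, ?_⟩
  · ext i j
    simp only [Matrix.transpose_apply, Matrix.of_apply]
    ring
  · funext j
    simp only [vecMul, dotProduct, Matrix.of_apply]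
    by_cases hj : j = i0
    · subst hj
      have e1 : ∀ x : Fin n, y x *
        ((y j)⁻¹ * ((if x = j then (1:F) else 0) * t j + t x * if j = j then 1 else 0) +
          -s * (y j)⁻¹ ^ 2 * ((if x = j then 1 else 0) * if j = j then 1 else 0))
        = (if x = j then y j * ((y j)⁻¹ * t j + -s * (y j)⁻¹ ^ 2) else 0)
          + (y j)⁻¹ * (y x * t x) := by
        intro x
        by_cases h : x = j
        · subst h; simp only [eq_self_iff_true, if_true]; field_simp; ring
        · simp only [h, if_false, eq_self_iff_true, if_true, zero_mul, mul_zero,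
            mul_one, zero_add, add_zero]
          ring
      rw [Finset.sum_congr rfl fun x _ => e1 x, Finset.sum_add_distrib,
        Finset.sum_ite_eq' Finset.univ j, ← Finset.mul_sum, ← hs]
      simp only [Finset.mem_univ, if_pos]
      field_simp
      ring
    · have e1 : ∀ x : Fin n, y x *
        ((y i0)⁻¹ * ((if x = i0 then (1:F) else 0) * t j + t x * if j = i0 then 1 else 0) +
          -s * (y i0)⁻¹ ^ 2 * ((if x = i0 then 1 else 0) * if j = i0 then 1 else 0))
        = (if x = i0 then y i0 * ((y i0)⁻¹ * t j) else 0) := by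
        intro x
        by_cases h : x = i0
        · subst h; simp only [eq_self_iff_true, if_true, hj, if_false]; ring
        · simp only [h, if_false, hj, zero_mul, mul_zero, mul_one, zero_add, add_zero]
      rw [Finset.sum_congr rfl fun x _ => e1 x, Finset.sum_ite_eq' Finset.univ i0]
      simp only [Finset.mem_univ, if_pos]
      rw [mul_inv_cancel_left₀ hi0]

/-- The group `G = ⟨-I⟩ × B`, where `B` consists of the block matrices
`g_Q = [[I, 0], [Q, I]]` with `Q` symmetric `n × n` over `GF(q)`, acting on
`V = GF(q)^{2n}` by right multiplication, has exactly `q ^ n` orbits.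
An orbit quotient is modelled by `Quot` of the relation identifying `v` with
`v * (ε • g_Q)` for `ε = ±1` and `Q` symmetric. -/
theorem orbit_count_G (q n : ℕ) (hn : 1 ≤ n) (F : Type) [Field F] [Fintype F]
    (hq : Fintype.card F = q) (hodd : Odd q) :
    Nat.card (Quot (fun v w : (Fin n ⊕ Fin n) → F =>
      ∃ ε : F, (ε = 1 ∨ ε = -1) ∧ ∃ Q : Matrix (Fin n) (Fin n) F, Q.IsSymm ∧
        w = Matrix.vecMul v (ε • Matrix.fromBlocks 1 0 Q 1))) = q ^ n := by
  classical
  set R : ((Fin n ⊕ Fin n) → F) → ((Fin n ⊕ Fin n) → F) → Prop := fun v w =>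
    ∃ ε : F, (ε = 1 ∨ ε = -1) ∧ ∃ Q : Matrix (Fin n) (Fin n) F, Q.IsSymm ∧
      w = Matrix.vecMul v (ε • Matrix.fromBlocks 1 0 Q 1) with hR
  have h2 : (2 : F) ≠ 0 := by
    intro h
    have hd : ringChar F ∣ 2 := ringChar.dvd (by exact_mod_cast h)
    rcases (Nat.dvd_prime Nat.prime_two).1 hd with h1 | h1
    · exact CharP.ringChar_ne_one h1
    · have h3 := FiniteField.even_card_of_char_two h1
      rw [hq] at h3
      obtain ⟨k, rfl⟩ := hodd
      omega
  have hhalf : ∀ a : F, a = -a → a = 0 := by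
    intro a ha
    have h := mul_eq_zero.1 (show (2:F) * a = 0 by linear_combination ha)
    exact h.resolve_left h2
  set M := Fin n → F with hM
  letI S : Setoid M :=
    ⟨fun a b => a = b ∨ a = -b, by
      constructor
      · intro a; exact Or.inl rfl
      · intro a b h
        rcases h with h | h
        · exact Or.inl h.symm
        · exact Or.inr (by rw [h, neg_neg])
      · intro a b c hab hbc
        rcases hab with h | h <;> rcases hbc with h' | h'
        · exact Or.inl (h.trans h')
        · exact Or.inr (h.trans h')
        · exact Or.inr (by rw [h, h'])
        · exact Or.inl (by rw [h, h', neg_neg])⟩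
  set σ : M → M := fun v => (Quotient.mk S v).out with hσdef
  have hmkσ : ∀ v, Quotient.mk S (σ v) = Quotient.mk S v := fun v => Quotient.out_eq _
  have hσrel : ∀ v, σ v = v ∨ σ v = -v := fun v => Quotient.exact (hmkσ v)
  have hσcongr : ∀ v w : M, Quotient.mk S v = Quotient.mk S w → σ v = σ w := by
    intro v w h
    show (Quotient.mk S v).out = (Quotient.mk S w).out
    rw [h]
  have hσneg : ∀ v, σ (-v) = σ v := fun v =>
    hσcongr _ _ (Quotient.sound (Or.inr rfl))
  have hσidem : ∀ v, σ (σ v) = σ v := fun v => hσcongr _ _ (hmkσ v)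
  have hσeq : ∀ v w : M, σ v = σ w → v = w ∨ v = -w := by
    intro v w h
    exact Quotient.exact (((hmkσ v).symm.trans (by rw [h])).trans (hmkσ w))
  have hσzero : ∀ v : M, σ v = 0 → v = 0 := by
    intro v h
    rcases hσrel v with h' | h'
    · rw [h] at h'; exact h'.symm
    · rw [h] at h'; rw [← neg_neg v, ← h', neg_zero]
  have hσsmul : ∀ (ε : F), (ε = 1 ∨ ε = -1) → ∀ v : M, σ (ε • v) = σ v := by
    rintro ε (rfl | rfl) v
    · rw [one_smul]
    · rw [neg_smul, one_smul, hσneg]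
  set f : ((Fin n ⊕ Fin n) → F) → M := fun v =>
    if (v ∘ Sum.inr) = 0 then σ (v ∘ Sum.inl) else -σ (v ∘ Sum.inr) with hfdef
  have hfval0 : ∀ v : (Fin n ⊕ Fin n) → F, (v ∘ Sum.inr) = 0 → f v = σ (v ∘ Sum.inl) := by
    intro v h; rw [hfdef]; exact if_pos h
  have hfval1 : ∀ v : (Fin n ⊕ Fin n) → F, (v ∘ Sum.inr) ≠ 0 → f v = -σ (v ∘ Sum.inr) := by
    intro v h; rw [hfdef]; exact if_neg h
  have hcomp : ∀ (v : (Fin n ⊕ Fin n) → F) (ε : F) (Q : Matrix (Fin n) (Fin n) F),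
      Matrix.vecMul v (ε • Matrix.fromBlocks 1 0 Q 1) =
        ε • Sum.elim (v ∘ Sum.inl + (v ∘ Sum.inr) ᵥ* Q) (v ∘ Sum.inr) := by
    intro v ε Q
    have h1 : Matrix.vecMul v (ε • Matrix.fromBlocks 1 0 Q 1)
        = ε • Matrix.vecMul v (Matrix.fromBlocks 1 0 Q 1 :
            Matrix (Fin n ⊕ Fin n) (Fin n ⊕ Fin n) F) := by
      funext i
      simp only [vecMul, dotProduct, Pi.smul_apply, Matrix.smul_apply, smul_eq_mul,
        Finset.mul_sum]
      exact Finset.sum_congr rfl fun x _ => by ring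
    rw [h1, vecMul_fromBlocks]
    congr 1
    simp [vecMul_one, vecMul_zero]
  have hcompl : ∀ (ε : F) (a b : Fin n → F),
      ((ε • Sum.elim a b : (Fin n ⊕ Fin n) → F) ∘ Sum.inl) = ε • a := by
    intro ε a b; funext j; simp
  have hcompr : ∀ (ε : F) (a b : Fin n → F),
      ((ε • Sum.elim a b : (Fin n ⊕ Fin n) → F) ∘ Sum.inr) = ε • b := by
    intro ε a b; funext j; simp
  have hεne : ∀ ε : F, (ε = 1 ∨ ε = -1) → ε ≠ 0 := by
    rintro ε (rfl | rfl) <;> simp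
  have hεsq : ∀ ε : F, (ε = 1 ∨ ε = -1) → ε * ε = 1 := by
    rintro ε (rfl | rfl) <;> ring
  have hf : ∀ v w, R v w → f v = f w := by
    rintro v w ⟨ε, hε, Q, hQ, rfl⟩
    rw [hcomp]
    by_cases hy : (v ∘ Sum.inr) = 0
    · have hz : ((ε • Sum.elim (v ∘ Sum.inl + (v ∘ Sum.inr) ᵥ* Q) (v ∘ Sum.inr) :
          (Fin n ⊕ Fin n) → F) ∘ Sum.inr) = 0 := by
        rw [hcompr, hy, smul_zero]
      rw [hfval0 _ hy, hfval0 _ hz, hcompl, hy, zero_vecMul, add_zero, hσsmul ε hε]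
    · have hz : ((ε • Sum.elim (v ∘ Sum.inl + (v ∘ Sum.inr) ᵥ* Q) (v ∘ Sum.inr) :
          (Fin n ⊕ Fin n) → F) ∘ Sum.inr) ≠ 0 := by
        rw [hcompr]
        exact smul_ne_zero (hεne ε hε) hy
      rw [hfval1 _ hy, hfval1 _ hz, hcompr, hσsmul ε hε]
  set fbar : Quot R → M := Quot.lift f hf with hfbar
  have hstep : ∀ (v : (Fin n ⊕ Fin n) → F) (ε : F), (ε = 1 ∨ ε = -1) →
      ∀ Q : Matrix (Fin n) (Fin n) F, Q.IsSymm →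
      Quot.mk R v = Quot.mk R (ε • Sum.elim (v ∘ Sum.inl + (v ∘ Sum.inr) ᵥ* Q) (v ∘ Sum.inr)) :=
    fun v ε hε Q hQ => Quot.sound ⟨ε, hε, Q, hQ, (hcomp v ε Q).symm⟩
  have hsurj : Function.Surjective fbar := by
    intro t
    by_cases ht : σ t = t
    · refine ⟨Quot.mk R (Sum.elim t 0), ?_⟩
      show f (Sum.elim t 0) = t
      have h0 : ((Sum.elim t 0 : (Fin n ⊕ Fin n) → F) ∘ Sum.inr) = 0 := by funext j; rfl
      have h1 : ((Sum.elim t 0 : (Fin n ⊕ Fin n) → F) ∘ Sum.inl) = t := by funext j; rfl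
      rw [hfval0 _ h0, h1, ht]
    · have ht' : σ t = -t := (hσrel t).resolve_left ht
      have htne : t ≠ 0 := by
        intro h
        apply ht
        rw [h]
        rcases hσrel 0 with h' | h'
        · exact h'
        · rw [h', neg_zero]
      refine ⟨Quot.mk R (Sum.elim 0 t), ?_⟩
      show f (Sum.elim 0 t) = t
      have h0 : ((Sum.elim 0 t : (Fin n ⊕ Fin n) → F) ∘ Sum.inr) = t := by funext j; rfl
      rw [hfval1 _ (by rw [h0]; exact htne), h0, ht', neg_neg]
  have hinj : Function.Injective fbar := by
    intro a b
    refine Quot.ind (β := fun a => fbar a = fbar b → a = b) ?_ a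
    intro v
    refine Quot.ind (β := fun b => fbar (Quot.mk R v) = fbar b → Quot.mk R v = b) ?_ b
    intro w h
    replace h : f v = f w := h
    by_cases hy : (v ∘ Sum.inr) = 0 <;> by_cases hy' : (w ∘ Sum.inr) = 0
    · -- both second blocks zero
      rw [hfval0 _ hy, hfval0 _ hy'] at h
      have hw : ∀ ε : F, (ε = 1 ∨ ε = -1) → (w ∘ Sum.inl) = ε • (v ∘ Sum.inl) →
          Quot.mk R v = Quot.mk R w := by
        intro ε hε hx
        have hweq : w = ε • Sum.elim
            (v ∘ Sum.inl + (v ∘ Sum.inr) ᵥ* (0 : Matrix (Fin n) (Fin n) F))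
            (v ∘ Sum.inr) := by
          funext i
          cases i with
          | inl j =>
            have h1 := congrFun hx j
            simp only [Function.comp_apply, Pi.smul_apply, smul_eq_mul] at h1
            simp only [Pi.smul_apply, Sum.elim_inl, Pi.add_apply, vecMul_zero,
              Pi.zero_apply, add_zero, smul_eq_mul]
            exact h1
          | inr j =>
            have h1 := congrFun hy j
            have h2 := congrFun hy' j
            simp only [Function.comp_apply, Pi.zero_apply] at h1 h2
            show w (Sum.inr j) = ε * v (Sum.inr j)
            rw [h1, h2, mul_zero]
        rw [hweq]
        exact hstep v ε hε 0 (by simp [Matrix.IsSymm])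
      rcases hσeq _ _ h with hxx | hxx
      · exact hw 1 (Or.inl rfl) (by rw [one_smul, ← hxx])
      · exact hw (-1) (Or.inr rfl) (by rw [neg_smul, one_smul, hxx, neg_neg])
    · -- mixed case 1: contradiction
      rw [hfval0 _ hy, hfval1 _ hy'] at h
      exfalso
      have h5 : σ (v ∘ Sum.inl) = σ (w ∘ Sum.inr) := by
        have h4 := congrArg σ h
        rwa [hσidem, hσneg, hσidem] at h4
      have h6 : σ (w ∘ Sum.inr) = -σ (w ∘ Sum.inr) := h5.symm.trans h
      have h7 : σ (w ∘ Sum.inr) = 0 := funext fun j => hhalf _ (by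
        have h8 := congrFun h6 j
        exact h8)
      exact hy' (hσzero _ h7)
    · -- mixed case 2: contradiction
      rw [hfval1 _ hy, hfval0 _ hy'] at h
      exfalso
      have h5 : σ (w ∘ Sum.inl) = σ (v ∘ Sum.inr) := by
        have h4 := congrArg σ h.symm
        rwa [hσidem, hσneg, hσidem] at h4
      have h6 : σ (v ∘ Sum.inr) = -σ (v ∘ Sum.inr) := h5.symm.trans h.symm
      have h7 : σ (v ∘ Sum.inr) = 0 := funext fun j => hhalf _ (by
        have h8 := congrFun h6 j
        exact h8)
      exact hy (hσzero _ h7)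
    · -- both second blocks nonzero
      rw [hfval1 _ hy, hfval1 _ hy'] at h
      replace h : σ (v ∘ Sum.inr) = σ (w ∘ Sum.inr) := neg_injective h
      have hεex : ∃ ε : F, (ε = 1 ∨ ε = -1) ∧ (w ∘ Sum.inr) = ε • (v ∘ Sum.inr) := by
        rcases hσeq _ _ h with hxx | hxx
        · exact ⟨1, Or.inl rfl, by rw [one_smul, ← hxx]⟩
        · exact ⟨-1, Or.inr rfl, by rw [neg_smul, one_smul, hxx, neg_neg]⟩
      obtain ⟨ε, hε, hyy⟩ := hεex
      obtain ⟨Q, hQ, hQeq⟩ := exists_symm_vecMul (v ∘ Sum.inr) hy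
        (ε • (w ∘ Sum.inl) - (v ∘ Sum.inl))
      have hweq : w = ε • Sum.elim (v ∘ Sum.inl + (v ∘ Sum.inr) ᵥ* Q) (v ∘ Sum.inr) := by
        funext i
        cases i with
        | inl j =>
          have h1 := congrFun hQeq j
          simp only [Pi.sub_apply, Pi.smul_apply, smul_eq_mul] at h1
          simp only [Pi.smul_apply, Sum.elim_inl, Pi.add_apply, h1, smul_eq_mul,
            Function.comp_apply]
          have hh := hεsq ε hε
          linear_combination (-(w (Sum.inl j))) * hh
        | inr j =>
          have h1 := congrFun hyy j
          simp only [Function.comp_apply, Pi.smul_apply, smul_eq_mul] at h1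
          simp only [Pi.smul_apply, Sum.elim_inr, smul_eq_mul]
          exact h1
      rw [hweq]
      exact hstep v ε hε Q hQ
  have hcard : Nat.card (Quot R) = Nat.card M :=
    Nat.card_eq_of_bijective fbar ⟨hinj, hsurj⟩
  rw [hcard, hM, Nat.card_eq_fintype_card, Fintype.card_fun, hq, Fintype.card_fin]
end

section
/- For v = (x,y) ∈ GF(q)^n × GF(q)^n with y ≠ 0, the number of n×n symmetric matrices Q over GF(q) with yQ = 0 is q^{n(n-1)/2}. -/
open Matrix

section aux
variable {n : ℕ} {F : Type} [Field F] [Fintype F]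

/-- Submodule of symmetric matrices. -/
def symmSub (n : ℕ) (F : Type) [Field F] : Submodule F (Matrix (Fin n) (Fin n) F) where
  carrier := {Q | Q.IsSymm}
  add_mem' := fun ha hb => ha.add hb
  zero_mem' := Matrix.isSymm_zero
  smul_mem' := fun c _ ha => ha.smul c

/-- The linear map sending symmetric Q to y ᵥ* Q. -/
def annMap (y : Fin n → F) : symmSub n F →ₗ[F] (Fin n → F) where
  toFun Q := Matrix.vecMul y Q.1
  map_add' Q R := by simp [Matrix.vecMul_add]
  map_smul' c Q := by
    ext j
    simp [Matrix.vecMul, dotProduct, Finset.mul_sum]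
    ring_nf
    apply Finset.sum_congr rfl
    intros; ring

end aux

/-- For a nonzero row vector `y ∈ GF(q)^n`, the number of `n × n` symmetric matrices `Q`
over `GF(q)` with `y * Q = 0` is `q ^ (n * (n - 1) / 2)`. -/
theorem symmetric_annihilator_count (q n : ℕ) (hn : 1 ≤ n) (F : Type) [Field F] [Fintype F]
    (hq : Fintype.card F = q) (y : Fin n → F) (hy : y ≠ 0) :
    Nat.card {Q : Matrix (Fin n) (Fin n) F // Q.IsSymm ∧ Matrix.vecMul y Q = 0} =
      q ^ (n * (n - 1) / 2) := by
  classical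
  -- choose i0 with y i0 ≠ 0
  obtain ⟨i0, hi0⟩ : ∃ i, y i ≠ 0 := by
    by_contra h; push_neg at h; exact hy (funext h)
  set f : symmSub n F →+ (Fin n → F) := (annMap y).toAddMonoidHom with hf
  -- surjectivity
  have hsurj : Function.Surjective f := by
    intro v
    set a : Fin n → F := Pi.single i0 (y i0)⁻¹ with ha
    have hya : ∑ k, y k * a k = 1 := by
      rw [Finset.sum_eq_single i0]
      · simp [ha, mul_inv_cancel₀ hi0]
      · intro b _ hb; simp [ha, Pi.single_eq_of_ne hb]
      · simp
    set s : F := ∑ k, y k * v k with hs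
    refine ⟨⟨fun i j => a i * v j + v i * a j - s * (a i * a j), ?_⟩, ?_⟩
    · show Matrix.IsSymm _
      ext i j
      simp [Matrix.transpose]
      ring
    · ext j
      show Matrix.vecMul y _ j = v j
      simp only [Matrix.vecMul, dotProduct]
      have : ∀ i, y i * (a i * v j + v i * a j - s * (a i * a j)) =
          (y i * a i) * v j + (y i * v i) * a j - s * ((y i * a i) * a j) := by
        intro i; ring
      rw [Finset.sum_congr rfl fun i _ => this i]
      rw [Finset.sum_sub_distrib, Finset.sum_add_distrib, ← Finset.sum_mul, ← Finset.sum_mul,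
        ← Finset.mul_sum, ← Finset.sum_mul, hya, ← hs]
      ring
  -- our subtype ≃ kernel of f
  have e1 : {Q : Matrix (Fin n) (Fin n) F // Q.IsSymm ∧ Matrix.vecMul y Q = 0} ≃ f.ker :=
    { toFun := fun Q => ⟨⟨Q.1, Q.2.1⟩, Q.2.2⟩
      invFun := fun Q => ⟨Q.1.1, Q.1.2, Q.2⟩
      left_inv := fun Q => rfl
      right_inv := fun Q => rfl }
  -- card of symmetric matrices
  have e2 : symmSub n F ≃ ({p : Fin n × Fin n // p.2 ≤ p.1} → F) :=
    { toFun := fun Q p => Q.1 p.1.1 p.1.2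
      invFun := fun g =>
        ⟨fun i j => if h : j ≤ i then g ⟨(i, j), h⟩ else g ⟨(j, i), le_of_not_ge h⟩, by
          show Matrix.IsSymm _
          ext i j
          change (if h : i ≤ j then g ⟨(j, i), h⟩ else g ⟨(i, j), le_of_not_ge h⟩) =
            (if h : j ≤ i then g ⟨(i, j), h⟩ else g ⟨(j, i), le_of_not_ge h⟩)
          by_cases h : j ≤ i
          · by_cases h' : i ≤ j
            · have : i = j := le_antisymm h' h
              subst this; rfl
            · rw [dif_neg h', dif_pos h]
          · by_cases h' : i ≤ j
            · rw [dif_pos h', dif_neg h]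
            · exact absurd (le_total i j) (by simp [h, h'])⟩
      left_inv := fun Q => by
        ext i j
        by_cases h : j ≤ i
        · simp [h]
        · simp only [h, dif_neg, not_false_iff]
          exact Q.2.apply _ _
      right_inv := fun g => by
        ext p
        simp [p.2] }
  have cardT : Fintype.card {p : Fin n × Fin n // p.2 ≤ p.1} = n * (n + 1) / 2 := by
    rw [Fintype.card_congr (Equiv.subtypeProdEquivSigmaSubtype fun (i j : Fin n) => j ≤ i)]
    rw [Fintype.card_sigma]
    have : ∀ i : Fin n, Fintype.card {j : Fin n // j ≤ i} = (i : ℕ) + 1 := by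
      intro i
      rw [Fintype.card_subtype]
      have he : (Finset.univ.filter fun j => j ≤ i) = Finset.Iic i := by
        ext j; simp
      rw [he, Fin.card_Iic]
    rw [Finset.sum_congr rfl fun i _ => this i]
    rw [Fin.sum_univ_eq_sum_range (fun i => (i : ℕ) + 1)]
    have h2 : (∑ i ∈ Finset.range n, (i + 1)) * 2 = n * (n + 1) := by
      have h3 := Finset.sum_range_id_mul_two (n + 1)
      rw [Finset.sum_range_succ'] at h3
      simpa [mul_comm] using h3
    omega
  have hq1 : 1 ≤ q := hq ▸ Fintype.card_pos
  -- cardinalities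
  have cardS : Nat.card (symmSub n F) = q ^ (n * (n + 1) / 2) := by
    rw [Nat.card_congr e2, Nat.card_eq_fintype_card, Fintype.card_fun, hq, cardT]
  have cardQuot : Nat.card (symmSub n F ⧸ f.ker) = q ^ n := by
    rw [Nat.card_congr (QuotientAddGroup.quotientKerEquivOfSurjective f hsurj).toEquiv]
    rw [Nat.card_eq_fintype_card, Fintype.card_fun, hq, Fintype.card_fin]
  have key := AddSubgroup.card_eq_card_quotient_mul_card_addSubgroup f.ker
  rw [cardS, cardQuot, Nat.card_congr e1.symm] at key
  -- arithmetic
  have harith : n * (n + 1) / 2 = n + n * (n - 1) / 2 := by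
    obtain ⟨m, rfl⟩ : ∃ m, n = m + 1 := ⟨n - 1, (Nat.succ_pred_eq_of_pos hn).symm⟩
    simp only [Nat.add_sub_cancel]
    have e1 : (m + 1) * (m + 1 + 1) = 2 * (m + 1) + (m + 1) * m := by ring
    obtain ⟨k, hk⟩ : Even ((m + 1) * m) := by
      rw [mul_comm]; exact Nat.even_mul_succ_self m
    omega
  rw [harith, pow_add] at key
  exact (Nat.eq_of_mul_eq_mul_left (pow_pos (by omega : 0 < q) n) key).symm
end

section
/- The terms of odd rank cancel in the sum Σ_{Q ∈ S_n} ρ^{-rank Q} Δ(Q): for each symmetric Q of odd rank over GF(q) (q odd) and ν a fixed nonsquare, Δ(νQ) = -Δ(Q) and rank(νQ) = rank(Q), so the total contribution of odd-rank symmetric matrices to the sum is zero. -/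
open Matrix
open scoped Classical

/-- The canonical additive character of the finite field `F` of characteristic `p`. -/
noncomputable def psi (p : ℕ) (F : Type) [Field F] [Fintype F] [Algebra (ZMod p) F] : F → ℂ :=
  fun a => Complex.exp (2 * Real.pi * Complex.I * ((Algebra.trace (ZMod p) F a).val : ℂ) / p)

/-- `Δ(Q)`: the quadratic character of the product of the nonzero diagonal entries of a
diagonalization of the symmetric matrix `Q`, i.e. the quadratic character of the determinant
of the nonsingular part of `Q` (with `Δ(0) = 1`). -/
noncomputable def Delta (F : Type) [Field F] [Fintype F] [DecidableEq F] {n : ℕ}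
    (Q : Matrix (Fin n) (Fin n) F) : ℤ :=
  if h : ∃ M : Matrix (Fin n) (Fin n) F, ∃ d : Fin n → F,
      IsUnit M ∧ Q = Mᵀ * Matrix.diagonal d * M then
    quadraticChar F (∏ i ∈ Finset.univ.filter (fun i => h.choose_spec.choose i ≠ 0),
      h.choose_spec.choose i)
  else 1

section Aux

variable {F : Type} [Field F] [Fintype F] [DecidableEq F] {n : ℕ}

/-- The quadratic character of the product of nonzero diagonal entries is a congruence
invariant of diagonal matrices. -/
lemma prod_char_invariant (d e : Fin n → F) (P : Matrix (Fin n) (Fin n) F) (hP : IsUnit P.det)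
    (h : Matrix.diagonal d = Pᵀ * Matrix.diagonal e * P) :
    quadraticChar F (∏ i ∈ Finset.univ.filter (fun i => d i ≠ 0), d i) =
    quadraticChar F (∏ i ∈ Finset.univ.filter (fun i => e i ≠ 0), e i) := by
  have hPt : IsUnit Pᵀ.det := by rwa [Matrix.det_transpose]
  have hcard : Fintype.card {i // d i ≠ 0} = Fintype.card {i // e i ≠ 0} := by
    have h1 := congrArg Matrix.rank h
    rw [Matrix.rank_diagonal, Matrix.rank_mul_eq_left_of_isUnit_det _ _ hP,
      Matrix.rank_mul_eq_right_of_isUnit_det _ _ hPt, Matrix.rank_diagonal] at h1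
    exact h1
  set φ := Fintype.equivOfCardEq hcard with hφ
  set A : Matrix {i // d i ≠ 0} {i // d i ≠ 0} F :=
    Matrix.of (fun k j => P (φ k).1 j.1) with hA
  set E : Matrix {i // d i ≠ 0} {i // d i ≠ 0} F :=
    Matrix.diagonal (fun k : {i // d i ≠ 0} => e (φ k).1) with hE
  have key : Matrix.diagonal (fun i : {i // d i ≠ 0} => d i.1) = Aᵀ * E * A := by
    ext i j
    have hentry := congrFun (congrFun h i.1) j.1
    rw [Matrix.mul_assoc, Matrix.mul_apply] at hentry ⊢
    have lhs_eq :
        (Matrix.diagonal (fun i : {i // d i ≠ 0} => d i.1)) i j = (Matrix.diagonal d) i.1 j.1 := by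
      by_cases hij : i = j
      · subst hij; simp
      · rw [Matrix.diagonal_apply_ne _ hij,
          Matrix.diagonal_apply_ne _ (fun hc => hij (Subtype.ext hc))]
    rw [lhs_eq, hentry]
    have step : ∀ k : {i // d i ≠ 0}, Aᵀ i k * (E * A) k j
        = Pᵀ i.1 (φ k).1 * ((Matrix.diagonal e) * P) (φ k).1 j.1 := by
      intro k
      rw [hE, Matrix.transpose_apply, Matrix.diagonal_mul, Matrix.diagonal_mul]
      rfl
    rw [Finset.sum_congr rfl (fun k _ => step k)]
    rw [Equiv.sum_comp φ (fun m : {i // e i ≠ 0} =>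
      Pᵀ i.1 m.1 * ((Matrix.diagonal e) * P) m.1 j.1)]
    rw [← Finset.sum_subtype (Finset.univ.filter (fun m => e m ≠ 0))
      (fun m => by simp) (fun m => Pᵀ i.1 m * ((Matrix.diagonal e) * P) m j.1)]
    rw [Finset.sum_filter_of_ne]
    intro m _ hne
    by_contra hem
    exact hne (by rw [Matrix.diagonal_mul, hem, zero_mul, mul_zero])
  have hdet := congrArg Matrix.det key
  rw [Matrix.det_mul, Matrix.det_mul, Matrix.det_transpose, Matrix.det_diagonal,
    Matrix.det_diagonal] at hdet
  have hdprod : (∏ i ∈ Finset.univ.filter (fun i => d i ≠ 0), d i)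
      = ∏ i : {i // d i ≠ 0}, d i.1 := by
    rw [← Finset.prod_subtype (Finset.univ.filter (fun i => d i ≠ 0)) (fun m => by simp)
      (fun i => d i)]
  have heprod : (∏ i ∈ Finset.univ.filter (fun i => e i ≠ 0), e i)
      = ∏ k : {i // d i ≠ 0}, e (φ k).1 := by
    rw [Finset.prod_subtype (p := fun i => e i ≠ 0) (Finset.univ.filter (fun i => e i ≠ 0))
      (fun m => by simp) (fun i => e i)]
    exact (Equiv.prod_comp φ (fun m : {i // e i ≠ 0} => e m.1)).symm
  have hAdet : A.det ≠ 0 := by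
    intro h0
    have hd0 : (∏ i : {i // d i ≠ 0}, d i.1) ≠ 0 :=
      Finset.prod_ne_zero_iff.mpr (fun i _ => i.2)
    exact hd0 (by rw [hdet, h0, mul_zero])
  rw [hdprod, heprod, hdet]
  have : A.det * (∏ k : {i // d i ≠ 0}, e (φ k).1) * A.det
      = A.det ^ 2 * (∏ k : {i // d i ≠ 0}, e (φ k).1) := by ring
  rw [this, _root_.map_mul, quadraticChar_sq_one' hAdet, one_mul]

/-- Two diagonalizations of the same matrix give congruent diagonal matrices. -/
lemma decomp_transfer (d e : Fin n → F) (M N : Matrix (Fin n) (Fin n) F)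
    (hM : IsUnit M) (hN : IsUnit N)
    (h : Mᵀ * Matrix.diagonal d * M = Nᵀ * Matrix.diagonal e * N) :
    ∃ P : Matrix (Fin n) (Fin n) F, IsUnit P.det ∧
      Matrix.diagonal d = Pᵀ * Matrix.diagonal e * P := by
  have hMd : IsUnit M.det := (Matrix.isUnit_iff_isUnit_det M).mp hM
  have hMtd : IsUnit Mᵀ.det := by rwa [Matrix.det_transpose]
  refine ⟨N * M⁻¹, ?_, ?_⟩
  · rw [Matrix.det_mul]
    exact ((Matrix.isUnit_iff_isUnit_det N).mp hN).mul (Matrix.isUnit_nonsing_inv_det M hMd)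
  · have : Matrix.diagonal d = (Mᵀ)⁻¹ * (Nᵀ * Matrix.diagonal e * N) * M⁻¹ := by
      rw [← h]
      rw [Matrix.mul_assoc Mᵀ, Matrix.nonsing_inv_mul_cancel_left _ _ hMtd,
        Matrix.mul_nonsing_inv_cancel_right _ _ hMd]
    rw [this, Matrix.transpose_mul, Matrix.transpose_nonsing_inv]
    noncomm_ring

/-- `Delta` computed from any diagonalization. -/
lemma Delta_eq (Q M : Matrix (Fin n) (Fin n) F) (d : Fin n → F)
    (hM : IsUnit M) (hQ : Q = Mᵀ * Matrix.diagonal d * M) :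
    Delta F Q = quadraticChar F (∏ i ∈ Finset.univ.filter (fun i => d i ≠ 0), d i) := by
  have hex : ∃ M' : Matrix (Fin n) (Fin n) F, ∃ d' : Fin n → F,
      IsUnit M' ∧ Q = M'ᵀ * Matrix.diagonal d' * M' := ⟨M, d, hM, hQ⟩
  rw [Delta, dif_pos hex]
  obtain ⟨hu, heq⟩ := hex.choose_spec.choose_spec
  obtain ⟨P, hP, hPe⟩ := decomp_transfer d hex.choose_spec.choose M hex.choose hM hu
    (by rw [← hQ, ← heq])
  exact_mod_cast (prod_char_invariant _ _ P hP hPe).symm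

lemma rank_decomp (Q M : Matrix (Fin n) (Fin n) F) (d : Fin n → F) (hM : IsUnit M)
    (hQ : Q = Mᵀ * Matrix.diagonal d * M) :
    Q.rank = (Finset.univ.filter (fun i => d i ≠ 0)).card := by
  have hMd : IsUnit M.det := (Matrix.isUnit_iff_isUnit_det M).mp hM
  have hMtd : IsUnit Mᵀ.det := by rwa [Matrix.det_transpose]
  rw [hQ, Matrix.rank_mul_eq_left_of_isUnit_det _ _ hMd,
    Matrix.rank_mul_eq_right_of_isUnit_det _ _ hMtd, Matrix.rank_diagonal,
    Fintype.card_subtype]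

lemma rank_smul_ne (c : F) (hc : c ≠ 0) (Q : Matrix (Fin n) (Fin n) F) :
    (c • Q).rank = Q.rank := by
  rw [Matrix.smul_eq_diagonal_mul]
  apply Matrix.rank_mul_eq_right_of_isUnit_det
  rw [Matrix.det_diagonal]
  exact isUnit_iff_ne_zero.mpr (by simp [Finset.prod_const, hc])

/-- Every symmetric matrix over a field in which 2 is invertible can be diagonalized
by a congruence transformation. -/
lemma exists_decomp [Invertible (2 : F)] (Q : Matrix (Fin n) (Fin n) F) (hQ : Q.IsSymm) :
    ∃ M : Matrix (Fin n) (Fin n) F, ∃ d : Fin n → F,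
      IsUnit M ∧ Q = Mᵀ * Matrix.diagonal d * M := by
  set B : LinearMap.BilinForm F (Fin n → F) := Matrix.toLinearMap₂' F Q with hB
  have hBsymm : LinearMap.IsSymm B := by
    rw [LinearMap.isSymm_def]
    intro x y
    simp only [hB, Matrix.toLinearMap₂'_apply, smul_eq_mul, RingHom.id_apply]
    rw [Finset.sum_comm]
    refine Finset.sum_congr rfl fun i _ => Finset.sum_congr rfl fun j _ => ?_
    rw [hQ.apply i j]
    ring
  obtain ⟨v0, hv0⟩ := LinearMap.BilinForm.exists_orthogonal_basis hBsymm
  set v : Module.Basis (Fin n) F (Fin n → F) := v0.reindex (finCongr (Module.finrank_fin_fun F))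
    with hv_def
  have hv : ∀ i j, i ≠ j → B (v i) (v j) = 0 := by
    intro i j hij
    rw [hv_def, Module.Basis.reindex_apply, Module.Basis.reindex_apply]
    exact hv0 (fun hc => hij (by simpa using congrArg (finCongr (Module.finrank_fin_fun F)) hc))
  set L : (Fin n → F) →ₗ[F] (Fin n → F) := v.equivFun.toLinearMap with hL
  set M := LinearMap.toMatrix' L with hM
  set d : Fin n → F := fun i => B (v i) (v i) with hd
  have hone : M * LinearMap.toMatrix' (v.equivFun.symm : (Fin n → F) ≃ₗ[F] _).toLinearMap = 1 := by
    rw [hM, hL, ← LinearMap.toMatrix'_comp]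
    simp
  have hMunit : IsUnit M := by
    apply (Matrix.isUnit_iff_isUnit_det M).mpr
    have := congrArg Matrix.det hone
    rw [Matrix.det_mul, Matrix.det_one] at this
    exact IsUnit.of_mul_eq_one _ this
  have hLv : ∀ i, L (v i) = Pi.single i 1 := by
    intro i
    funext j
    rw [hL]
    simp [Module.Basis.equivFun_self, Pi.single_apply, eq_comm]
  have hdiag : ∀ i j : Fin n, (Matrix.toLinearMap₂' (S₁ := F) (S₂ := F) F (Matrix.diagonal d))
      (Pi.single i 1) (Pi.single j 1) = Matrix.diagonal d i j := by
    intro i j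
    rw [Matrix.toLinearMap₂'_apply]
    simp only [Pi.single_apply, Matrix.diagonal_apply, smul_eq_mul, ite_mul, one_mul, zero_mul,
      mul_ite, mul_one, mul_zero]
    rcases eq_or_ne i j with rfl | hij
    · simp
    · simp [hij, Ne.symm hij]
  have hBeq : B = (Matrix.toLinearMap₂' F (Matrix.diagonal d)).compl₁₂ L L := by
    refine LinearMap.ext_basis v v (fun i j => ?_)
    rw [LinearMap.compl₁₂_apply, hLv, hLv]
    refine Eq.trans ?_ (hdiag i j).symm
    by_cases hij : i = j
    · subst hij
      rw [Matrix.diagonal_apply_eq]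
    · rw [Matrix.diagonal_apply_ne _ hij]
      exact hv i j hij
  refine ⟨M, d, hMunit, ?_⟩
  have h2 : LinearMap.toMatrix₂' F B = Mᵀ * Matrix.diagonal d * M := by
    rw [hBeq, LinearMap.toMatrix₂'_compl₁₂, LinearMap.toMatrix'_toLinearMap₂']
  rw [← h2, hB, LinearMap.toMatrix'_toLinearMap₂']

end Aux

/-- Odd-rank terms cancel in `Σ_{Q ∈ S_n} ρ^{-rank Q} Δ(Q)`: for a nonsquare `ν` and
symmetric `Q` of odd rank, `Δ(νQ) = -Δ(Q)` and `rank(νQ) = rank Q`; consequently the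
total contribution of the odd-rank symmetric matrices to the sum is zero. -/
theorem odd_rank_cancel (q n p : ℕ) [Fact p.Prime] (hn : 1 ≤ n) (F : Type) [Field F] [Fintype F]
    [DecidableEq F] [Algebra (ZMod p) F] (hp : p = ringChar F) (hq : Fintype.card F = q)
    (hodd : Odd q) (ν : F) (hν : ¬ IsSquare ν) :
    (∀ Q : Matrix (Fin n) (Fin n) F, Q.IsSymm → Odd Q.rank →
      Delta F (ν • Q) = -(Delta F Q) ∧ (ν • Q).rank = Q.rank) ∧
    (∑ Q ∈ Finset.univ.filter (fun Q : Matrix (Fin n) (Fin n) F => Q.IsSymm ∧ Odd Q.rank),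
        (∑ α : F, psi p F (α ^ 2)) ^ (-(Q.rank : ℤ)) * (Delta F Q : ℂ)) = 0 := by
  have hF2 : ringChar F ≠ 2 := by
    intro h2
    have h := FiniteField.even_card_of_char_two h2
    rw [hq] at h
    rcases hodd with ⟨k, hk⟩
    omega
  haveI : Invertible (2 : F) := invertibleOfNonzero (Ring.two_ne_zero hF2)
  have hν0 : ν ≠ 0 := fun h => hν (h ▸ ⟨0, (mul_zero 0).symm⟩)
  have hχν : quadraticChar F ν = -1 := quadraticChar_neg_one_iff_not_isSquare.mpr hν
  have part1 : ∀ Q : Matrix (Fin n) (Fin n) F, Q.IsSymm → Odd Q.rank →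
      Delta F (ν • Q) = -(Delta F Q) ∧ (ν • Q).rank = Q.rank := by
    intro Q hsym hoddr
    refine ⟨?_, rank_smul_ne ν hν0 Q⟩
    obtain ⟨M, d, hM, hQd⟩ := exists_decomp Q hsym
    have hQ1 : Delta F Q
        = quadraticChar F (∏ i ∈ Finset.univ.filter (fun i => d i ≠ 0), d i) :=
      Delta_eq Q M d hM hQd
    have hsmul : ν • Q = Mᵀ * Matrix.diagonal (ν • d) * M := by
      rw [hQd, Matrix.diagonal_smul, Matrix.mul_smul, Matrix.smul_mul]
    have hQ2 : Delta F (ν • Q)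
        = quadraticChar F (∏ i ∈ Finset.univ.filter (fun i => (ν • d) i ≠ 0), (ν • d) i) :=
      Delta_eq _ M _ hM hsmul
    have hset : Finset.univ.filter (fun i => (ν • d) i ≠ 0)
        = Finset.univ.filter (fun i => d i ≠ 0) := by
      ext i
      simp [Pi.smul_apply, smul_eq_mul, hν0]
    have hrank : Q.rank = (Finset.univ.filter (fun i => d i ≠ 0)).card :=
      rank_decomp Q M d hM hQd
    have hprod : (∏ i ∈ Finset.univ.filter (fun i => d i ≠ 0), (ν • d) i)
        = ν ^ (Finset.univ.filter (fun i => d i ≠ 0)).card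
          * ∏ i ∈ Finset.univ.filter (fun i => d i ≠ 0), d i := by
      rw [← Finset.prod_const, ← Finset.prod_mul_distrib]
      rfl
    rw [hQ2, hset, hprod, _root_.map_mul, map_pow, hχν, hQ1, ← hrank]
    rcases hoddr with ⟨k, hk⟩
    rw [hk]
    simp [pow_succ, pow_mul]
  refine ⟨part1, ?_⟩
  set s := Finset.univ.filter (fun Q : Matrix (Fin n) (Fin n) F => Q.IsSymm ∧ Odd Q.rank) with hs
  set f : Matrix (Fin n) (Fin n) F → ℂ :=
    fun Q => (∑ α : F, psi p F (α ^ 2)) ^ (-(Q.rank : ℤ)) * (Delta F Q : ℂ) with hf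
  have hmem : ∀ (c : F), c ≠ 0 → ∀ Q ∈ s, c • Q ∈ s := by
    intro c hc Q hQ
    rw [hs, Finset.mem_filter] at hQ ⊢
    exact ⟨Finset.mem_univ _, hQ.2.1.smul c, by rw [rank_smul_ne c hc Q]; exact hQ.2.2⟩
  have hstep : ∀ Q ∈ s, f (ν • Q) = - f Q := by
    intro Q hQ
    rw [hs, Finset.mem_filter] at hQ
    obtain ⟨h1, h2⟩ := part1 Q hQ.2.1 hQ.2.2
    rw [hf]
    simp only [h1, h2]
    push_cast
    ring
  have hbij : (∑ Q ∈ s, f Q) = ∑ Q ∈ s, f (ν • Q) := by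
    refine Finset.sum_nbij' (fun Q => ν⁻¹ • Q) (fun Q => ν • Q)
      (fun Q hQ => hmem ν⁻¹ (inv_ne_zero hν0) Q hQ) (fun Q hQ => hmem ν hν0 Q hQ)
      (fun Q _ => by simp [smul_smul, mul_inv_cancel₀ hν0])
      (fun Q _ => by simp [smul_smul, inv_mul_cancel₀ hν0])
      (fun Q _ => by simp [smul_smul, mul_inv_cancel₀ hν0])
  have hneg : (∑ Q ∈ s, f Q) = - ∑ Q ∈ s, f Q := by
    conv_lhs => rw [hbij]
    rw [Finset.sum_congr rfl hstep, Finset.sum_neg_distrib]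
  have h2 : (2 : ℂ) * (∑ Q ∈ s, f Q) = 0 := by
    rw [two_mul]
    nth_rewrite 2 [hneg]
    ring
  have := (mul_eq_zero.mp h2).resolve_left two_ne_zero
  exact this
end

section
/- The number of skew-symmetric (alternating) n×n matrices of rank 2k over GF(q) is [n choose 2k]_q · q^{k²-k} · Π_{i=0}^{k-1}(q^{2i+1}-1), where [n choose 2k]_q is the Gaussian binomial coefficient. -/
open Matrix

variable {F : Type} [Field F] {m : ℕ} {ι ι' : Type} [Fintype ι] [Fintype ι']
  [DecidableEq ι] [DecidableEq ι']

lemma quad_eq (B : Matrix ι ι F) (M : Matrix ι' ι F) (i : ι') :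
    (M * B * Mᵀ) i i = ∑ b, M i b * ∑ c, B b c * M i c := by
  simp only [mul_apply, transpose_apply, Finset.sum_mul, Finset.mul_sum]
  rw [Finset.sum_comm]
  apply Finset.sum_congr rfl
  intro b _
  apply Finset.sum_congr rfl
  intro c _
  ring

lemma alt_quad' {A : Matrix ι ι F} (hA : Aᵀ = -A) (hd : ∀ i, A i i = 0)
    (x : ι → F) : ∑ b, x b * ∑ c, A b c * x c = 0 := by
  have h : ∑ b, x b * ∑ c, A b c * x c = ∑ p ∈ Finset.univ ×ˢ (Finset.univ : Finset ι),
      x p.1 * A p.1 p.2 * x p.2 := by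
    rw [Finset.sum_product]
    simp [Finset.mul_sum, mul_assoc]
  rw [h]
  apply Finset.sum_involution (fun p _ => (p.2, p.1))
  · intro p _
    have : A p.2 p.1 = -A p.1 p.2 := by
      have := congrFun (congrFun hA p.1) p.2
      simpa [transpose] using this
    simp only [this]; ring
  · intro p _ hf hcontra
    apply hf
    have h1 : p.2 = p.1 := congrArg Prod.fst hcontra
    rw [h1, hd]; ring
  · intro p hp; simp
  · intro p _; rfl

lemma congr_alt {B : Matrix ι ι F} (hB : Bᵀ = -B) (hd : ∀ i, B i i = 0)
    (M : Matrix ι' ι F) :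
    (M * B * Mᵀ)ᵀ = -(M * B * Mᵀ) ∧ ∀ i, (M * B * Mᵀ) i i = 0 := by
  constructor
  · rw [transpose_mul, transpose_mul, transpose_transpose, hB, ← Matrix.mul_assoc]
    simp [Matrix.mul_assoc]
  · intro i
    rw [quad_eq]
    exact alt_quad' hB hd _

lemma exists_unit_mulVec_eq (v w : ι → F) (hv : v ≠ 0) (hw : w ≠ 0) :
    ∃ Q : Matrix ι ι F, IsUnit Q.det ∧ Q *ᵥ v = w := by
  classical
  have hv' : LinearIndependent F ((↑) : ({v} : Set (ι → F)) → (ι → F)) :=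
    linearIndependent_unique_iff.mpr (by simpa using hv)
  have hw' : LinearIndependent F ((↑) : ({w} : Set (ι → F)) → (ι → F)) :=
    linearIndependent_unique_iff.mpr (by simpa using hw)
  let b := Module.Basis.extend hv'
  let c := Module.Basis.extend hw'
  have hvb : v ∈ LinearIndepOn.extend (show LinearIndepOn F id ({v} : Set (ι → F)) from hv') (Set.subset_univ _) :=
    LinearIndepOn.subset_extend (show LinearIndepOn F id ({v} : Set (ι → F)) from hv') _ (Set.mem_singleton v)
  have hwc : w ∈ LinearIndepOn.extend (show LinearIndepOn F id ({w} : Set (ι → F)) from hw') (Set.subset_univ _) :=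
    LinearIndepOn.subset_extend (show LinearIndepOn F id ({w} : Set (ι → F)) from hw') _ (Set.mem_singleton w)
  have : FiniteDimensional F (ι → F) := inferInstance
  let e : _ ≃ _ := (Module.Basis.indexEquiv b c).trans (Equiv.swap (Module.Basis.indexEquiv b c ⟨v, hvb⟩) ⟨w, hwc⟩)
  let f : (ι → F) ≃ₗ[F] (ι → F) := b.equiv c e
  refine ⟨LinearMap.toMatrix' (f : (ι → F) →ₗ[F] (ι → F)), ?_, ?_⟩
  · have hmul : LinearMap.toMatrix' (f : (ι → F) →ₗ[F] (ι → F)) *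
        LinearMap.toMatrix' (f.symm : (ι → F) →ₗ[F] (ι → F)) = 1 := by
      rw [← LinearMap.toMatrix'_comp]
      simp [LinearMap.toMatrix'_id]
    have := congrArg Matrix.det hmul
    rw [Matrix.det_mul, Matrix.det_one] at this
    exact IsUnit.of_mul_eq_one _ this
  · rw [← Matrix.toLin'_apply, Matrix.toLin'_toMatrix']
    show f v = w
    have h1 : f (b ⟨v, hvb⟩) = c (e ⟨v, hvb⟩) := b.equiv_apply _ c e
    have h2 : b ⟨v, hvb⟩ = v := Module.Basis.extend_apply_self hv' ⟨v, hvb⟩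
    have h3 : e ⟨v, hvb⟩ = ⟨w, hwc⟩ := by
      simp [e, Equiv.swap_apply_left]
    rw [h2] at h1
    rw [h1, h3]
    exact Module.Basis.extend_apply_self hw' ⟨w, hwc⟩



abbrev Kap (m : ℕ) := Fin 1 ⊕ Fin m
abbrev Iot (m : ℕ) := Fin 1 ⊕ Kap m

/-- standard-fiber matrix -/
def Bstd (t : Fin m → F) (C : Matrix (Fin m) (Fin m) F) : Matrix (Iot m) (Iot m) F :=
  Matrix.of fun p q =>
    match p, q with
    | Sum.inl _, Sum.inl _ => 0
    | Sum.inl _, Sum.inr (Sum.inl _) => 1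
    | Sum.inl _, Sum.inr (Sum.inr _) => 0
    | Sum.inr (Sum.inl _), Sum.inl _ => -1
    | Sum.inr (Sum.inl _), Sum.inr (Sum.inl _) => 0
    | Sum.inr (Sum.inl _), Sum.inr (Sum.inr j) => t j
    | Sum.inr (Sum.inr _), Sum.inl _ => 0
    | Sum.inr (Sum.inr i), Sum.inr (Sum.inl _) => -t i
    | Sum.inr (Sum.inr i), Sum.inr (Sum.inr j) => C i j

lemma Bstd_mulVec (t : Fin m → F) (C : Matrix (Fin m) (Fin m) F) (u : Iot m → F) :
    Bstd t C *ᵥ u = Sum.elim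
      (fun _ => u (Sum.inr (Sum.inl 0)))
      (Sum.elim (fun _ => -u (Sum.inl 0) + ∑ j, t j * u (Sum.inr (Sum.inr j)))
        (fun i => -t i * u (Sum.inr (Sum.inl 0)) + ∑ j, C i j * u (Sum.inr (Sum.inr j)))) := by
  funext p
  cases p with
  | inl a =>
    simp [mulVec, dotProduct, Fintype.sum_sum_type, Bstd]
  | inr b =>
    cases b with
    | inl a => simp [mulVec, dotProduct, Fintype.sum_sum_type, Bstd]
    | inr i => simp [mulVec, dotProduct, Fintype.sum_sum_type, Bstd]

lemma mulVec_inj_iff {ι : Type} [Fintype ι] (B : Matrix ι ι F) :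
    Function.Injective B.mulVec ↔ ∀ u, B *ᵥ u = 0 → u = 0 := by
  constructor
  · intro h u hu
    apply h
    simpa using hu
  · intro h u v huv
    have : B *ᵥ (u - v) = 0 := by rw [Matrix.mulVec_sub, huv, sub_self]
    have := h _ this
    exact sub_eq_zero.1 this

lemma Bstd_isUnit_iff (t : Fin m → F) (C : Matrix (Fin m) (Fin m) F) :
    IsUnit (Bstd t C).det ↔ IsUnit C.det := by
  rw [← Matrix.isUnit_iff_isUnit_det, ← Matrix.isUnit_iff_isUnit_det,
    ← Matrix.mulVec_injective_iff_isUnit, ← Matrix.mulVec_injective_iff_isUnit,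
    mulVec_inj_iff, mulVec_inj_iff]
  constructor
  · intro h y hy
    -- build u
    set u : Iot m → F := Sum.elim (fun _ => ∑ j, t j * y j)
      (Sum.elim (fun _ => 0) y) with hu
    have h0 : Bstd t C *ᵥ u = 0 := by
      rw [Bstd_mulVec]
      funext p
      cases p with
      | inl a => simp [hu]
      | inr b =>
        cases b with
        | inl a => simp [hu]
        | inr i =>
          simp only [hu, Sum.elim_inr, Sum.elim_inl, Pi.zero_apply]
          have : ∑ j, C i j * y j = 0 := by
            have := congrFun hy i
            simpa [mulVec, dotProduct] using this
          simp [this]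
    have := h u h0
    funext j
    have := congrFun this (Sum.inr (Sum.inr j))
    simpa [hu] using this
  · intro h u hu
    rw [Bstd_mulVec] at hu
    have h1 : u (Sum.inr (Sum.inl 0)) = 0 := by
      have := congrFun hu (Sum.inl 0)
      simpa using this
    have h2 : (fun j => u (Sum.inr (Sum.inr j))) = 0 := by
      apply h
      funext i
      have := congrFun hu (Sum.inr (Sum.inr i))
      simp only [Sum.elim_inr, Pi.zero_apply, h1, mul_zero, neg_mul] at this ⊢
      simpa [mulVec, dotProduct] using this
    have h3 : u (Sum.inl 0) = 0 := by
      have := congrFun hu (Sum.inr (Sum.inl 0))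
      simp only [Sum.elim_inr, Sum.elim_inl, Pi.zero_apply] at this
      have hz : ∀ j, u (Sum.inr (Sum.inr j)) = 0 := fun j => congrFun h2 j
      simp [hz] at this
      exact this
    funext p
    cases p with
    | inl a =>
      have : a = 0 := Subsingleton.elim _ _
      simp [this, h3]
    | inr b =>
      cases b with
      | inl a =>
        have : a = 0 := Subsingleton.elim _ _
        simp [this, h1]
      | inr i => exact congrFun h2 i

lemma Bstd_alt (t : Fin m → F) (C : Matrix (Fin m) (Fin m) F)
    (hC : Cᵀ = -C) (hd : ∀ i, C i i = 0) :
    (Bstd t C)ᵀ = -(Bstd t C) ∧ ∀ i, Bstd t C i i = 0 := by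
  constructor
  · funext p q
    cases p with
    | inl a => cases q with
      | inl b => simp [Bstd]
      | inr b => cases b with
        | inl b => simp [Bstd]
        | inr j => simp [Bstd]
    | inr a => cases a with
      | inl a => cases q with
        | inl b => simp [Bstd]
        | inr b => cases b with
          | inl b => simp [Bstd]
          | inr j => simp [Bstd]
      | inr i => cases q with
        | inl b => simp [Bstd]
        | inr b => cases b with
          | inl b => simp [Bstd]
          | inr j =>
            have := congrFun (congrFun hC i) j
            simpa [Bstd, transpose] using this
  · intro p
    cases p with
    | inl a => simp [Bstd]
    | inr b => cases b with
      | inl a => simp [Bstd]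
      | inr i => simp [Bstd, hd i]

section NaltSec
variable (F)
variable [Fintype F]

def AltU {ι : Type} [Fintype ι] [DecidableEq ι] (B : Matrix ι ι F) : Prop :=
  Bᵀ = -B ∧ (∀ i, B i i = 0) ∧ IsUnit B.det

noncomputable def Nalt (r : ℕ) : ℕ := Nat.card {B : Matrix (Fin r) (Fin r) F // AltU F B}

lemma card_altU_reindex {ι : Type} [Fintype ι] [DecidableEq ι] {r : ℕ} (e : ι ≃ Fin r) :
    Nat.card {B : Matrix ι ι F // AltU F B} = Nalt F r := by
  apply Nat.card_congr
  refine ⟨fun B => ⟨Matrix.reindex e e B.1, ?_⟩, fun B => ⟨Matrix.reindex e.symm e.symm B.1, ?_⟩,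
    fun B => ?_, fun B => ?_⟩
  · obtain ⟨h1, h2, h3⟩ := B.2
    refine ⟨?_, ?_, ?_⟩
    · rw [Matrix.transpose_reindex, h1]; ext i j; simp [Matrix.reindex]
    · intro i; simp [Matrix.reindex, h2]
    · rwa [Matrix.reindex_apply, Matrix.det_submatrix_equiv_self]
  · obtain ⟨h1, h2, h3⟩ := B.2
    refine ⟨?_, ?_, ?_⟩
    · rw [Matrix.transpose_reindex, h1]; ext i j; simp [Matrix.reindex]
    · intro i; simp [Matrix.reindex, h2]
    · rwa [Matrix.reindex_apply, Matrix.det_submatrix_equiv_self]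
  · apply Subtype.ext; simp
  · apply Subtype.ext; simp

variable {m : ℕ}

def tail0 (B : Matrix (Iot m) (Iot m) F) : Kap m → F := fun j => B (Sum.inl 0) (Sum.inr j)

def stdv (m : ℕ) : Kap m → F := Sum.elim (fun _ => 1) (fun _ => 0)

lemma stdv_ne_zero : stdv F m ≠ 0 := by
  intro h
  have := congrFun h (Sum.inl 0)
  simp [stdv] at this

lemma tail0_ne_zero {B : Matrix (Iot m) (Iot m) F} (hB : AltU F B) : tail0 F B ≠ 0 := by
  intro h
  obtain ⟨h1, h2, h3⟩ := hB
  have hrow : ∀ q, B (Sum.inl 0) q = 0 := by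
    intro q
    cases q with
    | inl a =>
      have : a = 0 := Subsingleton.elim _ _
      rw [this]; exact h2 _
    | inr j => exact congrFun h j
  have := Matrix.det_eq_zero_of_row_eq_zero (Sum.inl 0) hrow
  rw [this] at h3
  exact (not_isUnit_zero : ¬IsUnit (0 : F)) h3

/-- decomposition over the (nonzero) tail of the first row -/
noncomputable def E1 : {B : Matrix (Iot m) (Iot m) F // AltU F B} ≃
    Σ v : {v : Kap m → F // v ≠ 0}, {B : Matrix (Iot m) (Iot m) F // AltU F B ∧ tail0 F B = v.1} where
  toFun B := ⟨⟨tail0 F B.1, tail0_ne_zero F B.2⟩, ⟨B.1, B.2, rfl⟩⟩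
  invFun x := ⟨x.2.1, x.2.2.1⟩
  left_inv B := rfl
  right_inv x := by
    obtain ⟨⟨v, hv⟩, ⟨B, hB, ht⟩⟩ := x
    have ht' : tail0 F B = v := ht
    subst ht'
    rfl

def Pmat (Q : Matrix (Kap m) (Kap m) F) : Matrix (Iot m) (Iot m) F :=
  Matrix.fromBlocks 1 0 0 Q

lemma Pmat_det (Q : Matrix (Kap m) (Kap m) F) : (Pmat F Q).det = Q.det := by
  rw [Pmat, Matrix.det_fromBlocks_zero₂₁]; simp

lemma Pmat_mul (Q Q' : Matrix (Kap m) (Kap m) F) :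
    Pmat F Q * Pmat F Q' = Pmat F (Q * Q') := by
  simp [Pmat, Matrix.fromBlocks_multiply]

lemma Pmat_one : Pmat F (1 : Matrix (Kap m) (Kap m) F) = 1 := by
  simp [Pmat]

lemma tail0_Pmat_congr (Q : Matrix (Kap m) (Kap m) F) (B : Matrix (Iot m) (Iot m) F) :
    tail0 F (Pmat F Q * B * (Pmat F Q)ᵀ) = Q *ᵥ tail0 F B := by
  funext j
  show (Pmat F Q * B * (Pmat F Q)ᵀ) (Sum.inl 0) (Sum.inr j) = _
  rw [Matrix.mul_apply]
  have hrow : ∀ c, (Pmat F Q * B) (Sum.inl 0) c = B (Sum.inl 0) c := by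
    intro c
    rw [Matrix.mul_apply, Fintype.sum_sum_type]
    simp [Pmat, Matrix.fromBlocks, Matrix.one_apply, Fin.eq_zero]
  simp only [hrow, Matrix.transpose_apply]
  rw [Fintype.sum_sum_type]
  simp [Pmat, Matrix.fromBlocks, Matrix.mulVec, dotProduct, tail0, mul_comm]

noncomputable def Etrans (Q : Matrix (Kap m) (Kap m) F) (hQ : IsUnit Q.det)
    (v : Kap m → F) :
    {B : Matrix (Iot m) (Iot m) F // AltU F B ∧ tail0 F B = v} ≃
      {B : Matrix (Iot m) (Iot m) F // AltU F B ∧ tail0 F B = Q *ᵥ v} := by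
  have hQi : IsUnit (Q⁻¹).det := by
    rw [Matrix.det_nonsing_inv]
    exact isUnit_ringInverse.mpr hQ
  have hPP' : Pmat F Q * Pmat F Q⁻¹ = 1 := by
    rw [Pmat_mul, Matrix.mul_nonsing_inv _ hQ, Pmat_one]
  have hP'P : Pmat F Q⁻¹ * Pmat F Q = 1 := by
    rw [Pmat_mul, Matrix.nonsing_inv_mul _ hQ, Pmat_one]
  have key : ∀ (P P' : Matrix (Iot m) (Iot m) F), P' * P = 1 →
      ∀ B : Matrix (Iot m) (Iot m) F, P' * (P * B * Pᵀ) * P'ᵀ = B := by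
    intro P P' h B
    have h2 : Pᵀ * P'ᵀ = 1 := by rw [← Matrix.transpose_mul, h, Matrix.transpose_one]
    calc P' * (P * B * Pᵀ) * P'ᵀ = (P' * P) * B * (Pᵀ * P'ᵀ) := by
          simp only [Matrix.mul_assoc]
      _ = B := by rw [h, h2, Matrix.one_mul, Matrix.mul_one]
  have memmap : ∀ (Q' : Matrix (Kap m) (Kap m) F) (hQ' : IsUnit Q'.det)
      (B : Matrix (Iot m) (Iot m) F), AltU F B → AltU F (Pmat F Q' * B * (Pmat F Q')ᵀ) := by
    intro Q' hQ' B ⟨h1, h2, h3⟩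
    obtain ⟨ha, hb⟩ := congr_alt h1 h2 (Pmat F Q')
    refine ⟨ha, hb, ?_⟩
    rw [Matrix.det_mul, Matrix.det_mul, Matrix.det_transpose, Pmat_det]
    exact (hQ'.mul h3).mul hQ'
  refine Equiv.mk
    (fun B => ⟨Pmat F Q * B.1 * (Pmat F Q)ᵀ, memmap Q hQ B.1 B.2.1, ?_⟩)
    (fun B => ⟨Pmat F Q⁻¹ * B.1 * (Pmat F Q⁻¹)ᵀ, memmap Q⁻¹ hQi B.1 B.2.1, ?_⟩)
    (fun B => ?_) (fun B => ?_)
  · rw [tail0_Pmat_congr, B.2.2]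
  · rw [tail0_Pmat_congr, B.2.2, Matrix.mulVec_mulVec, Matrix.nonsing_inv_mul _ hQ,
      Matrix.one_mulVec]
  · exact Subtype.ext (key _ _ hP'P B.1)
  · exact Subtype.ext (key _ _ hPP' B.1)

lemma eq_Bstd {B : Matrix (Iot m) (Iot m) F} (h1 : Bᵀ = -B) (h2 : ∀ i, B i i = 0)
    (ht : tail0 F B = stdv F m) :
    B = Bstd (fun i => B (Sum.inr (Sum.inl 0)) (Sum.inr (Sum.inr i)))
      (Matrix.of fun i j => B (Sum.inr (Sum.inr i)) (Sum.inr (Sum.inr j))) := by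
  have hskew : ∀ p q, B q p = -B p q := by
    intro p q
    have := congrFun (congrFun h1 p) q
    simpa [Matrix.transpose] using this
  have htl : ∀ j, B (Sum.inl 0) (Sum.inr j) = stdv F m j := fun j => congrFun ht j
  funext p q
  cases p with
  | inl a =>
    have ha : a = 0 := Subsingleton.elim _ _
    subst ha
    cases q with
    | inl b =>
      have hb : b = 0 := Subsingleton.elim _ _
      subst hb
      simpa [Bstd] using h2 (Sum.inl 0)
    | inr b =>
      cases b with
      | inl b =>
        have hb : b = 0 := Subsingleton.elim _ _
        subst hb
        simpa [Bstd, stdv] using htl (Sum.inl 0)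
      | inr j => simpa [Bstd, stdv] using htl (Sum.inr j)
  | inr a =>
    cases a with
    | inl a =>
      have ha : a = 0 := Subsingleton.elim _ _
      subst ha
      cases q with
      | inl b =>
        have hb : b = 0 := Subsingleton.elim _ _
        subst hb
        rw [hskew (Sum.inl 0) (Sum.inr (Sum.inl 0)), htl (Sum.inl 0)]
        simp [Bstd, stdv]
      | inr b =>
        cases b with
        | inl b =>
          have hb : b = 0 := Subsingleton.elim _ _
          subst hb
          simpa [Bstd] using h2 (Sum.inr (Sum.inl 0))
        | inr j => simp [Bstd]
    | inr i =>
      cases q with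
      | inl b =>
        have hb : b = 0 := Subsingleton.elim _ _
        subst hb
        rw [hskew (Sum.inl 0) (Sum.inr (Sum.inr i)), htl (Sum.inr i)]
        simp [Bstd, stdv]
      | inr b =>
        cases b with
        | inl b =>
          have hb : b = 0 := Subsingleton.elim _ _
          subst hb
          rw [hskew (Sum.inr (Sum.inl 0)) (Sum.inr (Sum.inr i))]
          simp [Bstd]
        | inr j => simp [Bstd]

noncomputable def E3 :
    {B : Matrix (Iot m) (Iot m) F // AltU F B ∧ tail0 F B = stdv F m} ≃
      (Fin m → F) × {C : Matrix (Fin m) (Fin m) F // AltU F C} := by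
  refine Equiv.mk
    (fun B => ⟨fun i => B.1 (Sum.inr (Sum.inl 0)) (Sum.inr (Sum.inr i)),
      ⟨Matrix.of fun i j => B.1 (Sum.inr (Sum.inr i)) (Sum.inr (Sum.inr j)), ?_⟩⟩)
    (fun x => ⟨Bstd x.1 x.2.1, ⟨?_, ?_, ?_⟩, ?_⟩) (fun B => ?_) (fun x => ?_)
  · -- C is AltU
    obtain ⟨⟨h1, h2, h3⟩, ht⟩ := B.2
    have hB := eq_Bstd F h1 h2 ht
    have hCt : (Matrix.of fun i j => B.1 (Sum.inr (Sum.inr i)) (Sum.inr (Sum.inr j)))ᵀ =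
        -(Matrix.of fun i j => B.1 (Sum.inr (Sum.inr i)) (Sum.inr (Sum.inr j))) := by
      funext i j
      have := congrFun (congrFun h1 (Sum.inr (Sum.inr i))) (Sum.inr (Sum.inr j))
      simpa [Matrix.transpose] using this
    refine ⟨hCt, fun i => h2 (Sum.inr (Sum.inr i)), ?_⟩
    rw [← Bstd_isUnit_iff (fun i => B.1 (Sum.inr (Sum.inl 0)) (Sum.inr (Sum.inr i))), ← hB]
    exact h3
  · exact (Bstd_alt x.1 x.2.1 x.2.2.1 x.2.2.2.1).1
  · exact (Bstd_alt x.1 x.2.1 x.2.2.1 x.2.2.2.1).2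
  · exact (Bstd_isUnit_iff x.1 x.2.1).mpr x.2.2.2.2
  · funext j
    cases j with
    | inl a => simp [tail0, Bstd, stdv]
    | inr j => simp [tail0, Bstd, stdv]
  · obtain ⟨⟨h1, h2, h3⟩, ht⟩ := B.2
    exact (Subtype.ext (eq_Bstd F h1 h2 ht).symm)
  · rfl

lemma nat_card_sigma {α : Type} [Fintype α] (f : α → Type) [∀ a, Finite (f a)] :
    Nat.card (Σ a, f a) = ∑ a, Nat.card (f a) := by
  letI : ∀ a, Fintype (f a) := fun a => Fintype.ofFinite _
  simp [Nat.card_eq_fintype_card, Fintype.card_sigma]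

lemma Nalt_rec : Nalt F (m + 2) =
    (Fintype.card F ^ (m + 1) - 1) * (Fintype.card F ^ m * Nalt F m) := by
  classical
  have e : Iot m ≃ Fin (m + 2) := Fintype.equivFinOfCardEq
    (by simp only [Fintype.card_sum, Fintype.card_fin]; omega)
  rw [← card_altU_reindex F e, Nat.card_congr (E1 F)]
  rw [nat_card_sigma]
  have hfiber : ∀ v : {v : Kap m → F // v ≠ 0},
      Nat.card {B : Matrix (Iot m) (Iot m) F // AltU F B ∧ tail0 F B = v.1} =
        Fintype.card F ^ m * Nalt F m := by
    intro v
    obtain ⟨Q, hQ, hQv⟩ := exists_unit_mulVec_eq v.1 (stdv F m) v.2 (stdv_ne_zero F)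
    rw [Nat.card_congr (Etrans F Q hQ v.1), hQv, Nat.card_congr (E3 F), Nat.card_prod]
    congr 1
    rw [Nat.card_eq_fintype_card, Fintype.card_fun, Fintype.card_fin]
  rw [Finset.sum_congr rfl (fun v _ => hfiber v), Finset.sum_const, Finset.card_univ,
    smul_eq_mul]
  congr 1
  rw [Fintype.card_subtype_compl (p := fun v : Kap m → F => v = 0),
    Fintype.card_subtype_eq, Fintype.card_fun]
  simp only [Fintype.card_sum, Fintype.card_fin]
  rw [add_comm 1 m]

lemma Nalt_zero : Nalt F 0 = 1 := by
  rw [Nalt]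
  have : Unique {B : Matrix (Fin 0) (Fin 0) F // AltU F B} := by
    refine ⟨⟨⟨0, ?_, ?_, ?_⟩⟩, ?_⟩
    · funext i j; exact i.elim0
    · intro i; exact i.elim0
    · simp [Matrix.det_fin_zero]
    · intro a; apply Subtype.ext; funext i; exact i.elim0
  rw [Nat.card_eq_one_iff_unique]
  exact ⟨inferInstance, inferInstance⟩

lemma Nalt_even (k : ℕ) : Nalt F (2 * k) =
    Fintype.card F ^ (k ^ 2 - k) * ∏ i ∈ Finset.range k, (Fintype.card F ^ (2 * i + 1) - 1) := by
  induction k with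
  | zero => simpa using Nalt_zero F
  | succ k ih =>
    have h2 : 2 * (k + 1) = 2 * k + 2 := by omega
    rw [h2, Nalt_rec, ih, Finset.prod_range_succ]
    have he : (k + 1) ^ 2 - (k + 1) = (k ^ 2 - k) + 2 * k := by
      have hk : k ≤ k ^ 2 := Nat.le_self_pow two_ne_zero k
      have hexp : (k + 1) ^ 2 = k ^ 2 + 2 * k + 1 := by ring
      rw [hexp]
      omega
    rw [he, pow_add]
    ring

lemma isUnit_det_of_rank_eq {r : ℕ} (B : Matrix (Fin r) (Fin r) F) (h : B.rank = r) :
    IsUnit B.det := by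
  rw [← Matrix.isUnit_iff_isUnit_det, ← Matrix.mulVec_surjective_iff_isUnit]
  have htop : LinearMap.range B.mulVecLin = ⊤ := by
    apply Submodule.eq_top_of_finrank_eq
    rw [Module.finrank_fin_fun]
    exact h
  intro y
  have : y ∈ LinearMap.range B.mulVecLin := htop ▸ Submodule.mem_top
  obtain ⟨x, hx⟩ := this
  exact ⟨x, hx⟩

variable {n k : ℕ}

/-- fiber equivalence over a fixed column space -/
noncomputable def EA2 (W : Submodule F (Fin n → F)) (hW : Module.finrank F W = 2 * k) :
    {A : Matrix (Fin n) (Fin n) F // (Aᵀ = -A ∧ ∀ i, A i i = 0) ∧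
      LinearMap.range A.mulVecLin = W} ≃
    {B : Matrix (Fin (2 * k)) (Fin (2 * k)) F // AltU F B} := by
  classical
  have : Module.Finite F W := inferInstance
  let b : Module.Basis (Fin (2 * k)) F W := Module.finBasisOfFinrankEq F W hW
  let M : Matrix (Fin n) (Fin (2 * k)) F := Matrix.of fun i j => (b j : Fin n → F) i
  let W' := (Submodule.exists_isCompl W).choose
  have hW' : IsCompl W W' := (Submodule.exists_isCompl W).choose_spec
  let π : (Fin n → F) →ₗ[F] W := W.linearProjOfIsCompl W' hW'
  let N : Matrix (Fin (2 * k)) (Fin n) F :=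
    LinearMap.toMatrix' ((b.equivFun : W →ₗ[F] (Fin (2 * k) → F)) ∘ₗ π)
  -- basic facts
  have hNapp : ∀ x : Fin n → F, N *ᵥ x = b.equivFun (π x) := by
    intro x
    rw [← Matrix.toLin'_apply, Matrix.toLin'_toMatrix']
    rfl
  have hMapp : ∀ c : Fin (2 * k) → F, M *ᵥ c = ((b.equivFun.symm c : W) : Fin n → F) := by
    intro c
    funext i
    rw [Module.Basis.equivFun_symm_apply]
    simp only [Submodule.coe_sum, SetLike.val_smul, Finset.sum_apply, Pi.smul_apply,
      smul_eq_mul]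
    simp [M, Matrix.mulVec, dotProduct, mul_comm]
  have hMN : N * M = 1 := by
    ext i j
    have hcol : (fun l => M l j) = ((b j : W) : Fin n → F) := rfl
    have h1 : (N * M) i j = (N *ᵥ fun l => M l j) i := by
      simp [Matrix.mul_apply, Matrix.mulVec, dotProduct]
    rw [h1, hcol, hNapp]
    have : π ((b j : W) : Fin n → F) = b j := Submodule.linearProjOfIsCompl_apply_left hW' (b j)
    rw [this]
    simp [Module.Basis.equivFun_apply, Module.Basis.repr_self, Finsupp.single_apply, Matrix.one_apply, eq_comm]
  have hrange : LinearMap.range M.mulVecLin = W := by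
    apply le_antisymm
    · rintro _ ⟨c, rfl⟩
      rw [Matrix.mulVecLin_apply, hMapp]
      exact (b.equivFun.symm c).2
    · intro w hw
      refine ⟨b.equivFun ⟨w, hw⟩, ?_⟩
      rw [Matrix.mulVecLin_apply, hMapp, LinearEquiv.symm_apply_apply]
  have hMNW : ∀ w, w ∈ W → (M * N) *ᵥ w = w := by
    intro w hw
    rw [← Matrix.mulVec_mulVec, hNapp]
    have : π w = ⟨w, hw⟩ := Submodule.linearProjOfIsCompl_apply_left hW' ⟨w, hw⟩
    rw [this, hMapp, LinearEquiv.symm_apply_apply]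
  have hMT : ∀ y : Fin (2 * k) → F, Mᵀ *ᵥ (Nᵀ *ᵥ y) = y := by
    intro y
    rw [Matrix.mulVec_mulVec, ← Matrix.transpose_mul, hMN, Matrix.transpose_one,
      Matrix.one_mulVec]
  -- forward map data
  have fwd : ∀ B : Matrix (Fin (2 * k)) (Fin (2 * k)) F, AltU F B →
      ((M * B * Mᵀ)ᵀ = -(M * B * Mᵀ) ∧ ∀ i, (M * B * Mᵀ) i i = 0) ∧
        LinearMap.range (M * B * Mᵀ).mulVecLin = W := by
    intro B ⟨h1, h2, h3⟩
    refine ⟨congr_alt h1 h2 M, ?_⟩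
    rw [Matrix.mul_assoc, Matrix.mulVecLin_mul]
    rw [LinearMap.range_comp_of_range_eq_top, hrange]
    rw [LinearMap.range_eq_top]
    intro y
    obtain ⟨z, hz⟩ := (Matrix.mulVec_surjective_iff_isUnit.mpr
      ((Matrix.isUnit_iff_isUnit_det B).mpr h3)) y
    exact ⟨Nᵀ *ᵥ z, by rw [Matrix.mulVecLin_apply, ← Matrix.mulVec_mulVec, hMT, hz]⟩
  -- backward map data
  have hround : ∀ A : Matrix (Fin n) (Fin n) F, Aᵀ = -A →
      LinearMap.range A.mulVecLin = W → M * (N * A * Nᵀ) * Mᵀ = A := by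
    intro A hA hr
    have hMNA : M * N * A = A := by
      ext i j
      have hcolmem : (fun l => A l j) ∈ W := by
        rw [← hr]
        refine ⟨Pi.single j 1, ?_⟩
        rw [Matrix.mulVecLin_apply, Matrix.mulVec_single]
        funext l; simp
      have := congrFun (hMNW _ hcolmem) i
      rw [← this]
      simp [Matrix.mul_apply, Matrix.mulVec, dotProduct, Matrix.mul_assoc]
    have hANM : A * (M * N)ᵀ = A := by
      have hAT : M * N * Aᵀ = Aᵀ := by
        rw [hA]
        have : M * N * (-A) = -(M * N * A) := by rw [Matrix.mul_neg]
        rw [this, hMNA]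
      calc A * (M * N)ᵀ = (M * N * Aᵀ)ᵀ := by
            rw [Matrix.transpose_mul (M * N) Aᵀ, Matrix.transpose_transpose]
        _ = A := by rw [hAT, Matrix.transpose_transpose]
    calc M * (N * A * Nᵀ) * Mᵀ = (M * N) * A * (Nᵀ * Mᵀ) := by simp only [Matrix.mul_assoc]
      _ = (M * N) * A * (M * N)ᵀ := by rw [Matrix.transpose_mul]
      _ = (M * N * A) * (M * N)ᵀ := by simp only [Matrix.mul_assoc]
      _ = A := by rw [hMNA, hANM]
  have bwd : ∀ A : Matrix (Fin n) (Fin n) F, (Aᵀ = -A ∧ ∀ i, A i i = 0) →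
      LinearMap.range A.mulVecLin = W → AltU F (N * A * Nᵀ) := by
    intro A ⟨h1, h2⟩ hr
    obtain ⟨ha, hb⟩ := congr_alt h1 h2 N
    refine ⟨ha, hb, ?_⟩
    apply isUnit_det_of_rank_eq
    have hAr : A.rank = 2 * k := by
      rw [Matrix.rank, hr, hW]
    have hge : (N * A * Nᵀ).rank ≥ 2 * k := by
      have h5 : (M * (N * A * Nᵀ) * Mᵀ).rank = 2 * k := by rw [hround A h1 hr, hAr]
      calc 2 * k = (M * (N * A * Nᵀ) * Mᵀ).rank := h5.symm
        _ ≤ (M * (N * A * Nᵀ)).rank := Matrix.rank_mul_le_left _ _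
        _ ≤ (N * A * Nᵀ).rank := Matrix.rank_mul_le_right _ _
    have hle : (N * A * Nᵀ).rank ≤ 2 * k := by
      have := Matrix.rank_le_card_width (N * A * Nᵀ)
      simpa using this
    omega
  refine Equiv.mk
    (fun A => ⟨N * A.1 * Nᵀ, bwd A.1 A.2.1 A.2.2⟩)
    (fun B => ⟨M * B.1 * Mᵀ, fwd B.1 B.2⟩)
    (fun A => Subtype.ext (hround A.1 A.2.1.1 A.2.2))
    (fun B => ?_)
  apply Subtype.ext
  have hMTN : Mᵀ * Nᵀ = 1 := by
    rw [← Matrix.transpose_mul, hMN, Matrix.transpose_one]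
  calc N * (M * B.1 * Mᵀ) * Nᵀ = (N * M) * B.1 * (Mᵀ * Nᵀ) := by simp only [Matrix.mul_assoc]
    _ = B.1 := by rw [hMN, hMTN, Matrix.one_mul, Matrix.mul_one]

noncomputable def EA1 :
    {A : Matrix (Fin n) (Fin n) F // Aᵀ = -A ∧ (∀ i, A i i = 0) ∧ A.rank = 2 * k} ≃
    Σ W : {W : Submodule F (Fin n → F) // Module.finrank F W = 2 * k},
      {A : Matrix (Fin n) (Fin n) F // (Aᵀ = -A ∧ ∀ i, A i i = 0) ∧
        LinearMap.range A.mulVecLin = W.1} where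
  toFun A := ⟨⟨LinearMap.range A.1.mulVecLin, by rw [← Matrix.rank]; exact A.2.2.2⟩,
    ⟨A.1, ⟨A.2.1, A.2.2.1⟩, rfl⟩⟩
  invFun x := ⟨x.2.1, x.2.2.1.1, x.2.2.1.2, by rw [Matrix.rank, x.2.2.2]; exact x.1.2⟩
  left_inv A := rfl
  right_inv x := by
    obtain ⟨⟨W, hW⟩, ⟨A, hA, hr⟩⟩ := x
    have hr' : LinearMap.range A.mulVecLin = W := hr
    subst hr'
    rfl

lemma card_alt_rank :
    Nat.card {A : Matrix (Fin n) (Fin n) F // Aᵀ = -A ∧ (∀ i, A i i = 0) ∧ A.rank = 2 * k} =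
      Nat.card {W : Submodule F (Fin n → F) // Module.finrank F W = 2 * k} * Nalt F (2 * k) := by
  classical
  haveI : Finite (Submodule F (Fin n → F)) :=
    Finite.of_injective _ (SetLike.coe_injective (A := Submodule F (Fin n → F)))
  letI : Fintype {W : Submodule F (Fin n → F) // Module.finrank F W = 2 * k} :=
    Fintype.ofFinite _
  rw [Nat.card_congr (EA1 F), nat_card_sigma]
  have hfib : ∀ W : {W : Submodule F (Fin n → F) // Module.finrank F W = 2 * k},
      Nat.card {A : Matrix (Fin n) (Fin n) F // (Aᵀ = -A ∧ ∀ i, A i i = 0) ∧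
        LinearMap.range A.mulVecLin = W.1} = Nalt F (2 * k) := by
    intro W
    rw [Nat.card_congr (EA2 F W.1 W.2)]
    rfl
  rw [Finset.sum_congr rfl (fun W _ => hfib W), Finset.sum_const, Finset.card_univ,
    smul_eq_mul, Nat.card_eq_fintype_card]

end NaltSec




open Matrix

/-- The number of alternating (skew-symmetric with zero diagonal) `n × n` matrices of rank `2k`
over `GF(q)` is `[n choose 2k]_q · q^{k²-k} · Π_{i=0}^{k-1} (q^{2i+1} - 1)`, where the Gaussian
binomial coefficient `[n choose 2k]_q` is realized as the number of `2k`-dimensional subspaces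
of `GF(q)^n`. -/
theorem alternating_rank_count (q n k : ℕ) (hn : 1 ≤ n) (hk : 2 * k ≤ n) (F : Type)
    [Field F] [Fintype F] (hq : Fintype.card F = q) :
    Nat.card {A : Matrix (Fin n) (Fin n) F //
        Aᵀ = -A ∧ (∀ i, A i i = 0) ∧ A.rank = 2 * k} =
      Nat.card {W : Submodule F (Fin n → F) // Module.finrank F W = 2 * k} *
        q ^ (k ^ 2 - k) * ∏ i ∈ Finset.range k, (q ^ (2 * i + 1) - 1) := by
  subst hq
  rw [card_alt_rank, Nalt_even, mul_assoc]
end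

section
/- The q-binomial identity: q^{n(n-1)/2} = Σ_{k=0}^{⌊n/2⌋} [n choose 2k]_q · q^{k²-k} · Π_{i=0}^{k-1}(q^{2i+1}-1). -/
open Matrix


namespace QBin

noncomputable def gb (q n j : ℕ) : ℚ :=
  (∏ i ∈ Finset.range j, ((q:ℚ) ^ (n - i) - 1)) / (∏ i ∈ Finset.range j, ((q:ℚ) ^ (i+1) - 1))

variable {q : ℕ} (hq : 2 ≤ q)
include hq

lemma fac_ne (i : ℕ) : ((q:ℚ) ^ (i+1) - 1) ≠ 0 := by
  have : (2:ℚ) ≤ (q:ℚ) := by exact_mod_cast hq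
  have h1 : (1:ℚ) < (q:ℚ) ^ (i+1) := by
    apply one_lt_pow₀ (by linarith) (by omega)
  linarith

lemma den_ne (j : ℕ) : (∏ i ∈ Finset.range j, ((q:ℚ) ^ (i+1) - 1)) ≠ 0 :=
  Finset.prod_ne_zero_iff.2 fun i _ => fac_ne hq i

omit hq in
lemma gb_zero (n : ℕ) : gb q n 0 = 1 := by simp [gb]

omit hq in
lemma gb_eq_zero {n j : ℕ} (h : n < j) : gb q n j = 0 := by
  unfold gb
  rw [Finset.prod_eq_zero (Finset.mem_range.2 h) (by simp), zero_div]

lemma absorb (n j : ℕ) :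
    gb q n (j+1) * ((q:ℚ) ^ (j+1) - 1) = gb q n j * ((q:ℚ) ^ (n - j) - 1) := by
  have h1 := fac_ne hq j
  have h2 := den_ne hq j
  unfold gb
  rw [Finset.prod_range_succ, Finset.prod_range_succ]
  field_simp

lemma pascal {n j : ℕ} (hj : j ≤ n) :
    gb q (n+1) (j+1) = gb q n j + (q:ℚ) ^ (j+1) * gb q n (j+1) := by
  have hD := den_ne hq (j+1)
  have hnum : (∏ i ∈ Finset.range (j+1), ((q:ℚ) ^ (n+1 - i) - 1)) =
      ((q:ℚ) ^ (n+1) - 1) * ∏ i ∈ Finset.range j, ((q:ℚ) ^ (n - i) - 1) := by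
    rw [Finset.prod_range_succ']
    simp only [Nat.succ_sub_succ_eq_sub, Nat.sub_zero]
    ring
  have habs : (∏ i ∈ Finset.range (j+1), ((q:ℚ) ^ (n - i) - 1)) =
      (∏ i ∈ Finset.range j, ((q:ℚ) ^ (n - i) - 1)) * ((q:ℚ) ^ (n - j) - 1) :=
    Finset.prod_range_succ _ _
  have hqq : (q:ℚ) ^ (j+1) * (q:ℚ) ^ (n - j) = (q:ℚ) ^ (n+1) := by
    rw [← pow_add]; congr 1; omega
  unfold gb
  rw [hnum, habs, Finset.prod_range_succ]
  have h1 := fac_ne hq j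
  have h2 := den_ne hq j
  set N := ∏ i ∈ Finset.range j, ((q:ℚ) ^ (n - i) - 1) with hN
  set D := ∏ i ∈ Finset.range j, ((q:ℚ) ^ (i+1) - 1) with hDj
  have e1 : N / D = N * ((q:ℚ) ^ (j+1) - 1) / (D * ((q:ℚ) ^ (j+1) - 1)) :=
    (mul_div_mul_right _ _ h1).symm
  rw [e1, mul_div_assoc' ((q:ℚ)^(j+1)), ← add_div]
  congr 1
  linear_combination (-N) * hqq

/-- summand of the main identity -/
noncomputable def t (q n k : ℕ) : ℚ :=
  gb q n (2*k) * (q:ℚ) ^ (k^2 - k) * ∏ i ∈ Finset.range k, ((q:ℚ) ^ (2*i+1) - 1)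

/-- auxiliary telescoping term -/
noncomputable def g (q n k : ℕ) : ℚ :=
  gb q n (2*k) * (q:ℚ) ^ (k^2 + k) * ∏ i ∈ Finset.range k, ((q:ℚ) ^ (2*i+1) - 1)

lemma key {n k : ℕ} (hk : 2*k + 1 ≤ n) :
    t q (n+1) (k+1) = (q:ℚ)^n * t q n k + (g q n (k+1) - g q n k) := by
  have hsq : k ≤ k^2 := Nat.le_self_pow two_ne_zero k
  have h1 : 2*(k+1) = (2*k+1)+1 := by ring
  have hP : (∏ i ∈ Finset.range (k+1), ((q:ℚ) ^ (2*i+1) - 1)) =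
      (∏ i ∈ Finset.range k, ((q:ℚ) ^ (2*i+1) - 1)) * ((q:ℚ) ^ (2*k+1) - 1) :=
    Finset.prod_range_succ _ _
  have habs : gb q n (2*k+1) * ((q:ℚ) ^ (2*k+1) - 1)
      = gb q n (2*k) * ((q:ℚ) ^ (n - 2*k) - 1) := by
    have := absorb hq n (2*k)
    simpa using this
  have he1 : (k+1)^2 - (k+1) = k^2 + k := by
    have : (k+1)^2 = k^2+2*k+1 := by ring
    omega
  have he2 : (k+1)^2 + (k+1) = (k^2 + k) + (2*k+2) := by
    have : (k+1)^2 = k^2+2*k+1 := by ring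
    omega
  have he3 : (n - 2*k) + (k^2+k) = n + (k^2 - k) := by omega
  unfold t g
  rw [h1, pascal hq (by omega), hP, he1, he2]
  have hpow : (q:ℚ)^(n-2*k) * (q:ℚ)^(k^2+k) = (q:ℚ)^n * (q:ℚ)^(k^2-k) := by
    rw [← pow_add, ← pow_add, he3]
  have hpow2 : (q:ℚ)^(k^2+k+(2*k+2)) = (q:ℚ)^(k^2+k) * (q:ℚ)^(2*k+1+1) := by
    rw [← pow_add]
  linear_combination ((q:ℚ)^(k^2+k) * (∏ i ∈ Finset.range k, ((q:ℚ) ^ (2*i+1) - 1))) * habs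
    + (gb q n (2*k) * (∏ i ∈ Finset.range k, ((q:ℚ) ^ (2*i+1) - 1))) * hpow
    - (gb q n (2*k+1+1) * (∏ i ∈ Finset.range k, ((q:ℚ) ^ (2*i+1) - 1)) * ((q:ℚ)^(2*k+1) - 1)) * hpow2

end QBin

namespace QBin
variable {q : ℕ} (hq : 2 ≤ q)
include hq

lemma step (n : ℕ) :
    ∑ k ∈ Finset.range ((n+1)/2 + 1), t q (n+1) k
      = (q:ℚ)^n * ∑ k ∈ Finset.range (n/2 + 1), t q n k := by
  set K := (n+1)/2 with hK
  rw [Finset.sum_range_succ' (t q (n+1)) K]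
  have ht0 : t q (n+1) 0 = 1 := by simp [t, gb_zero]
  have hcong : ∀ k ∈ Finset.range K, t q (n+1) (k+1)
      = ((q:ℚ)^n * t q n k + (g q n (k+1) - g q n k)) := by
    intro k hk
    exact key hq (by simp only [Finset.mem_range, hK] at hk ⊢; omega)
  rw [Finset.sum_congr rfl hcong, Finset.sum_add_distrib, Finset.sum_range_sub (g q n),
    ← Finset.mul_sum, ht0]
  have hg0 : g q n 0 = 1 := by simp [g, gb_zero]
  rcases Nat.even_or_odd n with he | ho
  · obtain ⟨m, rfl⟩ := he
    have hKm : K = m := by omega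
    have hn2 : (m+m)/2 + 1 = m + 1 := by omega
    have hsq : m ≤ m^2 := Nat.le_self_pow two_ne_zero m
    have hgt : g q (m+m) m = (q:ℚ)^(m+m) * t q (m+m) m := by
      unfold g t
      have : m^2 + m = (m+m) + (m^2 - m) := by omega
      rw [this, pow_add]
      ring
    rw [hKm, hn2, Finset.sum_range_succ (t q (m+m)) m, hg0, hgt]
    ring
  · obtain ⟨m, rfl⟩ := ho
    have hKm : K = m + 1 := by omega
    have hn2 : (2*m+1)/2 + 1 = m + 1 := by omega
    have hgK : g q (2*m+1) (m+1) = 0 := by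
      unfold g
      rw [gb_eq_zero (by omega)]
      ring
    rw [hKm, hn2, hg0, hgK]
    ring

lemma Tmain (n : ℕ) :
    ∑ k ∈ Finset.range (n/2+1), t q n k = (q:ℚ)^(n*(n-1)/2) := by
  induction n with
  | zero => simp [t, gb_zero]
  | succ n ih =>
    rw [step hq n, ih, ← pow_add]
    congr 1
    have h1 : (n+1) * (n+1-1) / 2 = (n+1).choose 2 := (Nat.choose_two_right _).symm
    have h2 : n * (n-1) / 2 = n.choose 2 := (Nat.choose_two_right _).symm
    rw [h1, h2, Nat.choose_succ_succ, Nat.choose_one_right]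

end QBin


namespace QBin
variable {q : ℕ} (hq : 2 ≤ q)
include hq

omit hq in
lemma prod_fact {m d : ℕ} (hd : d ≤ m) :
    ∏ i ∈ Finset.range d, ((q:ℚ)^m - (q:ℚ)^i)
      = (∏ i ∈ Finset.range d, (q:ℚ)^i) * ∏ i ∈ Finset.range d, ((q:ℚ)^(m-i) - 1) := by
  rw [← Finset.prod_mul_distrib]
  refine Finset.prod_congr rfl fun i hi => ?_
  rw [mul_sub, mul_one, ← pow_add]
  simp only [Finset.mem_range] at hi
  congr 2
  omega

omit hq in
lemma refl_prod (d : ℕ) :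
    ∏ i ∈ Finset.range d, ((q:ℚ)^(d-i) - 1) = ∏ i ∈ Finset.range d, ((q:ℚ)^(i+1) - 1) := by
  rw [← Finset.prod_range_reflect]
  refine Finset.prod_congr rfl fun i hi => ?_
  simp only [Finset.mem_range] at hi
  congr 2
  omega

lemma gb_mul {n d : ℕ} (hd : d ≤ n) :
    gb q n d * ∏ i ∈ Finset.range d, ((q:ℚ)^d - (q:ℚ)^i)
      = ∏ i ∈ Finset.range d, ((q:ℚ)^n - (q:ℚ)^i) := by
  rw [prod_fact le_rfl, refl_prod, prod_fact hd]
  unfold gb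
  have hD := den_ne hq d
  field_simp

end QBin


section Counting
variable {F : Type} [Field F] [Fintype F] {n d : ℕ}

local notation "q" => Fintype.card F

/-- The equivalence between linearly independent `d`-tuples in `F^n` and pairs of a
`d`-dimensional subspace together with a linearly independent `d`-tuple inside it. -/
noncomputable def liEquiv (n d : ℕ) :
    {s : Fin d → (Fin n → F) // LinearIndependent F s} ≃
      Σ W : {W : Submodule F (Fin n → F) // Module.finrank F W = d},
        {t : Fin d → W.1 // LinearIndependent F t} := by
  refine Equiv.symm ?_
  refine (Equiv.sigmaCongrRight (fun W => ?_)).trans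
    (Equiv.sigmaFiberEquiv (fun s : {s : Fin d → (Fin n → F) // LinearIndependent F s} =>
      (⟨Submodule.span F (Set.range s.1), by
        rw [finrank_span_eq_card s.2, Fintype.card_fin]⟩ :
        {W : Submodule F (Fin n → F) // Module.finrank F W = d})))
  refine Equiv.symm ⟨fun p => ⟨fun i => ⟨p.1.1 i, ?_⟩, ?_⟩, fun t => ⟨⟨fun i => (t.1 i : Fin n → F), ?_⟩, ?_⟩, ?_, ?_⟩
  · have h := congrArg Subtype.val p.2
    simp only at h
    rw [← h]
    exact Submodule.subset_span (Set.mem_range_self i)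
  · exact LinearIndependent.of_comp W.1.subtype p.1.2
  · exact (W.1.subtype.linearIndependent_iff (Submodule.ker_subtype _)).2 t.2
  · apply Subtype.ext
    simp only
    have h1 : Submodule.span F (Set.range t.1) = ⊤ := by
      apply Submodule.eq_top_of_finrank_eq
      rw [finrank_span_eq_card t.2, Fintype.card_fin, W.2]
    have h2 : (fun i => (t.1 i : Fin n → F)) = W.1.subtype ∘ t.1 := rfl
    rw [h2, Set.range_comp, Submodule.span_image, h1, Submodule.map_top,
      Submodule.range_subtype]
  · intro p
    apply Subtype.ext
    apply Subtype.ext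
    rfl
  · intro t
    apply Subtype.ext
    funext i
    apply Subtype.ext
    rfl

lemma card_subspaces_mul (hd : d ≤ n) :
    Nat.card {W : Submodule F (Fin n → F) // Module.finrank F W = d} *
      ∏ i ∈ Finset.range d, (q ^ d - q ^ i) =
    ∏ i ∈ Finset.range d, (q ^ n - q ^ i) := by
  classical
  have hfr : Module.finrank F (Fin n → F) = n := Module.finrank_fin_fun F
  have hli : Nat.card {s : Fin d → (Fin n → F) // LinearIndependent F s} =
      ∏ i ∈ Finset.range d, (q ^ n - q ^ i) := by
    rw [card_linearIndependent (by rw [hfr]; exact hd), hfr, Finset.prod_range]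
  rw [← hli, Nat.card_congr (liEquiv n d)]
  have : ∀ W : {W : Submodule F (Fin n → F) // Module.finrank F W = d},
      Nat.card {t : Fin d → W.1 // LinearIndependent F t} =
        ∏ i ∈ Finset.range d, (q ^ d - q ^ i) := by
    intro W
    rw [card_linearIndependent (le_of_eq W.2.symm), W.2, Finset.prod_range]
  have hFT := Fintype.ofFinite {W : Submodule F (Fin n → F) // Module.finrank F W = d}
  have hFT2 : ∀ W : {W : Submodule F (Fin n → F) // Module.finrank F W = d},
      Fintype {t : Fin d → W.1 // LinearIndependent F t} := fun W => Fintype.ofFinite _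
  rw [Nat.card_eq_fintype_card (α := Sigma _), Fintype.card_sigma,
    Finset.sum_congr rfl (fun W _ => by
      rw [← Nat.card_eq_fintype_card, this W]), Finset.sum_const, Finset.card_univ,
    smul_eq_mul, Nat.card_eq_fintype_card]

lemma card_eq_gb (hd : d ≤ n) :
    (Nat.card {W : Submodule F (Fin n → F) // Module.finrank F W = d} : ℚ) =
      QBin.gb q n d := by
  have h1 : 1 < q := Fintype.one_lt_card
  have hq2 : 2 ≤ q := h1
  have hcastp : ∀ m : ℕ, d ≤ m → (((∏ i ∈ Finset.range d, (q ^ m - q ^ i) : ℕ)) : ℚ)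
      = ∏ i ∈ Finset.range d, ((q:ℚ)^m - (q:ℚ)^i) := by
    intro m hm
    rw [Nat.cast_prod]
    refine Finset.prod_congr rfl fun i hi => ?_
    simp only [Finset.mem_range] at hi
    rw [Nat.cast_sub (Nat.pow_le_pow_right (le_of_lt h1) (by omega))]
    push_cast
    ring
  have key := congrArg (Nat.cast : ℕ → ℚ) (card_subspaces_mul (F := F) hd)
  rw [Nat.cast_mul, hcastp d le_rfl, hcastp n hd] at key
  have hne : (∏ i ∈ Finset.range d, ((q:ℚ)^d - (q:ℚ)^i)) ≠ 0 := by
    refine Finset.prod_ne_zero_iff.2 fun i hi => sub_ne_zero.2 (ne_of_gt ?_)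
    simp only [Finset.mem_range] at hi
    exact pow_lt_pow_right₀ (by exact_mod_cast h1) hi
  exact mul_right_cancel₀ hne (key.trans (QBin.gb_mul hq2 hd).symm)


end Counting


/-- The `q`-binomial identity
`q^{n(n-1)/2} = Σ_{k=0}^{⌊n/2⌋} [n choose 2k]_q · q^{k²-k} · Π_{i=0}^{k-1} (q^{2i+1} - 1)`,
where `[n choose 2k]_q` is realized as the number of `2k`-dimensional subspaces of `GF(q)^n`. -/
theorem q_binomial_identity (q n : ℕ) (hn : 1 ≤ n) (F : Type) [Field F] [Fintype F]
    (hq : Fintype.card F = q) :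
    q ^ (n * (n - 1) / 2) =
      ∑ k ∈ Finset.range (n / 2 + 1),
        Nat.card {W : Submodule F (Fin n → F) // Module.finrank F W = 2 * k} *
          q ^ (k ^ 2 - k) * ∏ i ∈ Finset.range k, (q ^ (2 * i + 1) - 1) := by
  subst hq
  have h1 : 1 < Fintype.card F := Fintype.one_lt_card
  have hq2 : 2 ≤ Fintype.card F := h1
  rw [← Nat.cast_inj (R := ℚ), Nat.cast_sum]
  have hterm : ∀ k ∈ Finset.range (n/2+1),
      ((Nat.card {W : Submodule F (Fin n → F) // Module.finrank F W = 2*k} *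
        Fintype.card F ^ (k^2-k) *
        ∏ i ∈ Finset.range k, (Fintype.card F ^ (2*i+1) - 1) : ℕ) : ℚ)
      = QBin.t (Fintype.card F) n k := by
    intro k hk
    simp only [Finset.mem_range] at hk
    have h2k : 2*k ≤ n := by omega
    rw [Nat.cast_mul, Nat.cast_mul, card_eq_gb h2k, Nat.cast_pow, Nat.cast_prod]
    unfold QBin.t
    congr 1
    exact Finset.prod_congr rfl fun i _ => by
      rw [Nat.cast_sub (Nat.one_le_pow _ _ (by omega))]
      push_cast
      ring
  rw [Finset.sum_congr rfl hterm, QBin.Tmain hq2 n]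
  push_cast
  ring
end

section
/- Let Q be a quadratic form of rank r on GF(q)^n, q odd. The number Z of solutions of Q(x) = 0 (including x = 0) is Z = q^{n-1} + (1+(-1)^r)/2 · q^{n-1}(q-1) ρ^{-r} Δ(Q), where ρ is the quadratic Gauss sum and Δ(Q) the quadratic character of the determinant of the nonsingular part of Q. -/
open Matrix
open scoped Classical

/-- The ℂ-valued quadratic character. -/
noncomputable def chiC (F : Type) [Field F] [Fintype F] [DecidableEq F] : MulChar F ℂ :=
  (quadraticChar F).ringHomComp (Int.castRingHom ℂ)

lemma AddChar.map_sum' {ι A M : Type*} [AddCommMonoid A] [CommMonoid M] (ψ : AddChar A M)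
    (s : Finset ι) (f : ι → A) : ψ (∑ i ∈ s, f i) = ∏ i ∈ s, ψ (f i) := by
  classical
  induction s using Finset.induction with
  | empty => simp
  | insert _ _ h ih => rw [Finset.sum_insert h, ψ.map_add_eq_mul, Finset.prod_insert h, ih]

section Aux

variable {F : Type} [Field F] [Fintype F] [DecidableEq F]

lemma sq_fiber (hF : ringChar F ≠ 2) (f : F → ℂ) :
    ∑ a : F, f (a ^ 2) = ∑ u : F, (((quadraticChar F u : ℤ) : ℂ) + 1) * f u := by
  have key : ∀ u : F, (((quadraticChar F u : ℤ) : ℂ) + 1) * f u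
      = ∑ a ∈ Finset.univ.filter (fun a : F => a ^ 2 = u), f (a ^ 2) := by
    intro u
    rw [Finset.sum_congr rfl (fun a ha => by rw [(Finset.mem_filter.mp ha).2]),
      Finset.sum_const, nsmul_eq_mul]
    congr 1
    have h := quadraticChar_card_sqrts hF u
    rw [Set.toFinset_setOf] at h
    exact_mod_cast congrArg (fun z : ℤ => (z : ℂ)) h.symm
  rw [Finset.sum_congr rfl (fun u _ => key u)]
  exact (Finset.sum_fiberwise Finset.univ (fun a : F => a ^ 2) (fun a => f (a ^ 2))).symm

lemma sum_psi_mul_sq (hF : ringChar F ≠ 2) {ψ : AddChar F ℂ} (hψ : ψ.IsPrimitive)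
    {b : F} (hb : b ≠ 0) :
    ∑ a : F, ψ (b * a ^ 2) = chiC F b * gaussSum (chiC F) ψ := by
  have h1 : ∑ a : F, ψ (b * a ^ 2) = ∑ u : F, (((quadraticChar F u : ℤ) : ℂ) + 1) * ψ (b * u) :=
    sq_fiber hF (fun u => ψ (b * u))
  have h2 : ∑ u : F, ψ (b * u) = 0 := by
    have := AddChar.sum_eq_zero_of_ne_one (hψ hb)
    simpa [AddChar.mulShift_apply] using this
  have h3 : ∑ u : F, chiC F u * ψ (b * u) = gaussSum (chiC F) (ψ.mulShift b) := by
    simp [gaussSum, AddChar.mulShift_apply]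
  have hbb : chiC F b * chiC F b = 1 := by
    rcases quadraticChar_dichotomy hb with h | h <;>
      simp [chiC, MulChar.ringHomComp_apply, h]
  have h4 : chiC F b * gaussSum (chiC F) (ψ.mulShift b) = gaussSum (chiC F) ψ := by
    have := gaussSum_mulShift (chiC F) ψ (Units.mk0 b hb)
    simpa using this
  calc ∑ a : F, ψ (b * a ^ 2)
      = ∑ u : F, (((quadraticChar F u : ℤ) : ℂ) + 1) * ψ (b * u) := h1
    _ = (∑ u : F, chiC F u * ψ (b * u)) + ∑ u : F, ψ (b * u) := by
        rw [← Finset.sum_add_distrib]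
        refine Finset.sum_congr rfl fun u _ => ?_
        rw [add_mul, one_mul]
        rfl
    _ = gaussSum (chiC F) (ψ.mulShift b) := by rw [h2, h3, add_zero]
    _ = chiC F b * gaussSum (chiC F) ψ := by
        rw [← h4, ← mul_assoc, hbb, one_mul]

/-- Diagonalization of a symmetric matrix by congruence. -/
lemma exists_diagonalization [Invertible (2 : F)] {n : ℕ} (Q : Matrix (Fin n) (Fin n) F)
    (hQ : Q.IsSymm) :
    ∃ M : Matrix (Fin n) (Fin n) F, ∃ d : Fin n → F,
      IsUnit M ∧ Q = Mᵀ * Matrix.diagonal d * M := by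
  set B : LinearMap.BilinForm F (Fin n → F) := Matrix.toBilin' Q with hB
  have hBsymm : B.IsSymm := by
    refine LinearMap.BilinForm.isSymm_def.mpr fun x y => ?_
    simp only [hB, Matrix.toBilin'_apply', RingHom.id_apply]
    rw [Matrix.dotProduct_mulVec, ← Matrix.vecMul_transpose, hQ.eq, dotProduct_comm]
  obtain ⟨v0, hv0⟩ := LinearMap.BilinForm.exists_orthogonal_basis (LinearMap.BilinForm.isSymm_iff.mp hBsymm)
  let v : Module.Basis (Fin n) F (Fin n → F) :=
    v0.reindex (finCongr (by simp [Module.finrank_pi]))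
  have hv : B.IsOrthoᵢ ⇑v := by
    intro i j hij
    have hne : (finCongr (by simp [Module.finrank_pi] :
        Module.finrank F (Fin n → F) = n)).symm i ≠ (finCongr (by simp [Module.finrank_pi] :
        Module.finrank F (Fin n → F) = n)).symm j := fun h => hij ((finCongr (by simp [Module.finrank_pi] :
        Module.finrank F (Fin n → F) = n)).symm.injective h)
    have := hv0 hne
    simpa [v, Module.Basis.reindex_apply, Function.onFun] using this
  set e : Module.Basis (Fin n) F (Fin n → F) := Pi.basisFun F (Fin n) with he
  set A : Matrix (Fin n) (Fin n) F := e.toMatrix v with hA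
  set Ai : Matrix (Fin n) (Fin n) F := v.toMatrix e with hAi
  have hAAi : A * Ai = 1 := Module.Basis.toMatrix_mul_toMatrix_flip e v
  have hAiA : Ai * A = 1 := Module.Basis.toMatrix_mul_toMatrix_flip v e
  have key : Aᵀ * Q * A = Matrix.diagonal (fun i => B (v i) (v i)) := by
    have h1 : LinearMap.BilinForm.toMatrix e B = Q := by
      rw [he, LinearMap.BilinForm.toMatrix_basisFun, hB, LinearMap.BilinForm.toMatrix'_toBilin']
    have h2 : LinearMap.BilinForm.toMatrix v B = Matrix.diagonal (fun i => B (v i) (v i)) := by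
      ext i j
      by_cases hij : i = j
      · subst hij; simp [LinearMap.BilinForm.toMatrix_apply]
      · rw [LinearMap.BilinForm.toMatrix_apply, Matrix.diagonal_apply_ne _ hij]
        exact hv hij
    rw [← h1, ← h2]
    exact LinearMap.BilinForm.toMatrix_mul_basis_toMatrix e v B
  refine ⟨Ai, fun i => B (v i) (v i), ⟨⟨Ai, A, hAiA, hAAi⟩, rfl⟩, ?_⟩
  calc Q = (1 : Matrix (Fin n) (Fin n) F)ᵀ * Q * 1 := by simp
    _ = (A * Ai)ᵀ * Q * (A * Ai) := by rw [hAAi]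
    _ = Aiᵀ * (Aᵀ * Q * A) * Ai := by
        rw [Matrix.transpose_mul]
        simp only [Matrix.mul_assoc]
    _ = Aiᵀ * Matrix.diagonal (fun i => B (v i) (v i)) * Ai := by rw [key]

end Aux

/-- For a quadratic form `Q(x) = x Q xᵀ` on `GF(q)^n` (`q` odd) of rank `r`, the number `Z`
of solutions of `Q(x) = 0` (including `x = 0`) is
`Z = q^{n-1} + (1 + (-1)^r)/2 · q^{n-1} (q-1) ρ^{-r} Δ(Q)`, with `ρ = Σ_α ψ(α²)` the
quadratic Gauss sum. -/
theorem zero_solution_count (q n r p : ℕ) [Fact p.Prime] (hn : 1 ≤ n) (F : Type) [Field F]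
    [Fintype F] [DecidableEq F] [Algebra (ZMod p) F] (hp : p = ringChar F)
    (hq : Fintype.card F = q) (hodd : Odd q)
    (Q : Matrix (Fin n) (Fin n) F) (hQ : Q.IsSymm) (hr : Q.rank = r) :
    (Nat.card {x : Fin n → F // dotProduct x (Q.mulVec x) = 0} : ℂ) =
      (q : ℂ) ^ (n - 1) +
        ((1 + (-1 : ℂ) ^ r) / 2) * (q : ℂ) ^ (n - 1) * ((q : ℂ) - 1) *
          (∑ α : F, psi p F (α ^ 2)) ^ (-(r : ℤ)) * (Delta F Q : ℂ) := by
  subst hp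
  haveI : NeZero (ringChar F) := ⟨(Fact.out : (ringChar F).Prime).ne_zero⟩
  have hq0 : 0 < q := hq ▸ Fintype.card_pos
  have hqC : (q : ℂ) ≠ 0 := Nat.cast_ne_zero.mpr hq0.ne'
  have hF2 : ringChar F ≠ 2 := by
    intro h
    have h2 := FiniteField.even_card_of_char_two h
    rw [hq] at h2
    rcases hodd with ⟨k, hk⟩
    omega
  haveI : Invertible (2 : F) := invertibleOfNonzero (Ring.two_ne_zero hF2)
  -- the additive character
  set ψ : AddChar F ℂ :=
    (ZMod.stdAddChar (N := ringChar F)).compAddMonoidHom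
      (Algebra.trace (ZMod (ringChar F)) F).toAddMonoidHom with hψdef
  have hpsi : psi (ringChar F) F = ⇑ψ := by
    funext a
    simp only [psi, hψdef, AddChar.compAddMonoidHom_apply, LinearMap.toAddMonoidHom_coe,
      ZMod.stdAddChar_apply, ZMod.toCircle_apply]
  have hψne : ψ ≠ 1 := by
    obtain ⟨b, hb⟩ := FiniteField.trace_to_zmod_nondegenerate F (one_ne_zero (α := F))
    rw [one_mul] at hb
    intro hcontra
    apply hb
    have h1 : ZMod.stdAddChar (Algebra.trace (ZMod (ringChar F)) F b) = 1 := by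
      have := DFunLike.congr_fun hcontra b
      simpa [hψdef, AddChar.compAddMonoidHom_apply] using this
    exact ((ZMod.isPrimitive_stdAddChar (ringChar F)).zmod_char_eq_one_iff (ringChar F) _).mp h1
  have hψprim : ψ.IsPrimitive := AddChar.IsPrimitive.of_ne_one hψne
  -- the multiplicative character
  set χ : MulChar F ℂ := chiC F with hχdef
  have hχq : χ.IsQuadratic := (quadraticChar_isQuadratic F).comp (Int.castRingHom ℂ)
  have hχ0 : χ (0 : F) = 0 := by
    simp [hχdef, chiC, MulChar.ringHomComp_apply, quadraticChar_zero]
  have hχpm : ∀ t : F, t ≠ 0 → χ t = 1 ∨ χ t = -1 := by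
    intro t ht
    rcases quadraticChar_dichotomy ht with h | h
    · left; simp [hχdef, chiC, MulChar.ringHomComp_apply, h]
    · right; simp [hχdef, chiC, MulChar.ringHomComp_apply, h]
  have hχne : χ ≠ 1 := by
    obtain ⟨a, ha⟩ := quadraticChar_exists_neg_one hF2
    have ha0 : a ≠ 0 := by
      intro h; rw [h, quadraticChar_zero] at ha; exact absurd ha (by norm_num)
    intro hcontra
    have h1 : χ a = 1 := by rw [hcontra]; exact MulChar.one_apply (isUnit_iff_ne_zero.mpr ha0)
    have h2 : χ a = -1 := by simp [hχdef, chiC, MulChar.ringHomComp_apply, ha]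
    rw [h1] at h2; norm_num at h2
  set g : ℂ := gaussSum χ ψ with hgdef
  have hg2 : g ^ 2 = χ (-1) * q := by
    rw [hgdef, gaussSum_sq hχne hχq hψprim, hq]
  have hgne : g ≠ 0 :=
    gaussSum_ne_zero_of_nontrivial (by rw [hq]; exact hqC) hχne hψprim
  have hrho : ∑ α : F, ψ (α ^ 2) = g := by
    have h := sum_psi_mul_sq (F := F) hF2 hψprim (one_ne_zero)
    simpa using h
  -- diagonalization
  have hex : ∃ M : Matrix (Fin n) (Fin n) F, ∃ d : Fin n → F,
      IsUnit M ∧ Q = Mᵀ * Matrix.diagonal d * M := exists_diagonalization Q hQ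
  obtain ⟨hM, hQd⟩ := hex.choose_spec.choose_spec
  set M : Matrix (Fin n) (Fin n) F := hex.choose with hMdef
  set d : Fin n → F := hex.choose_spec.choose with hddef
  set supp : Finset (Fin n) := Finset.univ.filter (fun i => d i ≠ 0) with hsuppdef
  set P : F := ∏ i ∈ supp, d i with hPdef
  have hDelta : (Delta F Q : ℂ) = χ P := by
    have h1 : Delta F Q = quadraticChar F P := by
      simp only [Delta]
      rw [dif_pos hex]
    rw [h1]
    simp [hχdef, chiC, MulChar.ringHomComp_apply]
  -- rank
  have hrsupp : supp.card = r := by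
    rw [← hr, hQd]
    have hMdet : IsUnit M.det := (Matrix.isUnit_iff_isUnit_det M).mp hM
    have hMtdet : IsUnit Mᵀ.det := by rwa [Matrix.det_transpose]
    rw [Matrix.rank_mul_eq_left_of_isUnit_det M (Mᵀ * Matrix.diagonal d) hMdet,
      Matrix.rank_mul_eq_right_of_isUnit_det Mᵀ (Matrix.diagonal d) hMtdet,
      Matrix.rank_diagonal, Fintype.card_subtype]
  have hrn : r ≤ n := by
    rw [← hrsupp, hsuppdef]
    calc (Finset.univ.filter (fun i => d i ≠ 0)).card ≤ Finset.univ.card :=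
          Finset.card_filter_le _ _
      _ = n := by simp
  -- the counting identity
  set Z : ℕ := Nat.card {x : Fin n → F // dotProduct x (Q.mulVec x) = 0} with hZdef
  have hZcard : (Z : ℂ) = ((Finset.univ.filter
      (fun x : Fin n → F => dotProduct x (Q.mulVec x) = 0)).card : ℂ) := by
    rw [hZdef, Nat.card_eq_fintype_card, Fintype.card_subtype]
  have hcount : (q : ℂ) * Z = ∑ x : Fin n → F, ∑ t : F, ψ (t * (x ⬝ᵥ Q *ᵥ x)) := by
    have hinner : ∀ x : Fin n → F, (∑ t : F, ψ (t * (x ⬝ᵥ Q *ᵥ x)))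
        = if (x ⬝ᵥ Q *ᵥ x) = 0 then (q : ℂ) else 0 := by
      intro x
      by_cases hx : (x ⬝ᵥ Q *ᵥ x) = 0
      · rw [if_pos hx]
        simp [hx, hq]
      · rw [if_neg hx]
        have h := AddChar.sum_eq_zero_of_ne_one (hψprim hx)
        rw [← h]
        exact Finset.sum_congr rfl fun t _ => by rw [AddChar.mulShift_apply, mul_comm]
    rw [Finset.sum_congr rfl fun x _ => hinner x, Finset.sum_ite, Finset.sum_const,
      Finset.sum_const_zero, add_zero, nsmul_eq_mul, hZcard, mul_comm]
  have hS : ∀ t : F, t ≠ 0 → ∑ x : Fin n → F, ψ (t * (x ⬝ᵥ Q *ᵥ x))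
      = χ t ^ r * ((q : ℂ) ^ (n - r) * (χ P * g ^ r)) := by
    intro t ht
    have hbij : Function.Bijective (M.mulVec) :=
      ⟨Matrix.mulVec_injective_iff_isUnit.mpr hM, Matrix.mulVec_surjective_iff_isUnit.mpr hM⟩
    have hsub : ∀ x : Fin n → F, (x ⬝ᵥ Q *ᵥ x) = ∑ i, d i * (M.mulVec x i) ^ 2 := by
      intro x
      rw [hQd, ← Matrix.mulVec_mulVec, ← Matrix.mulVec_mulVec, Matrix.dotProduct_mulVec,
        Matrix.vecMul_transpose, dotProduct]
      refine Finset.sum_congr rfl fun i _ => ?_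
      rw [Matrix.mulVec_diagonal]
      ring
    calc ∑ x : Fin n → F, ψ (t * (x ⬝ᵥ Q *ᵥ x))
        = ∑ x : Fin n → F, ∏ i, ψ (t * d i * (M.mulVec x i) ^ 2) := by
          refine Finset.sum_congr rfl fun x _ => ?_
          rw [hsub x, Finset.mul_sum, AddChar.map_sum']
          exact Finset.prod_congr rfl fun i _ => by rw [mul_assoc]
      _ = ∑ y : Fin n → F, ∏ i, ψ (t * d i * (y i) ^ 2) :=
          Fintype.sum_bijective _ hbij _ _ fun x => rfl
      _ = ∏ i, ∑ a : F, ψ (t * d i * a ^ 2) := (Fintype.prod_sum (fun i (a : F) => ψ (t * d i * a ^ 2))).symm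
      _ = ∏ i, (if d i ≠ 0 then χ (t * d i) * g else (q : ℂ)) := by
          refine Finset.prod_congr rfl fun i _ => ?_
          by_cases hdi : d i = 0
          · simp [hdi, hq]
          · rw [if_pos hdi]
            exact sum_psi_mul_sq hF2 hψprim (mul_ne_zero ht hdi)
      _ = (∏ i ∈ supp, χ (t * d i) * g) *
            ∏ i ∈ Finset.univ.filter (fun i => ¬ d i ≠ 0), (q : ℂ) := by
          rw [← Finset.prod_filter_mul_prod_filter_not Finset.univ (fun i => d i ≠ 0)]
          congr 1
          · exact Finset.prod_congr rfl fun i hi => if_pos (Finset.mem_filter.mp hi).2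
          · exact Finset.prod_congr rfl fun i hi => if_neg (Finset.mem_filter.mp hi).2
      _ = χ t ^ r * ((q : ℂ) ^ (n - r) * (χ P * g ^ r)) := by
          rw [Finset.prod_mul_distrib, Finset.prod_const, Finset.prod_const]
          have hcard2 : (Finset.univ.filter (fun i => ¬ d i ≠ 0)).card = n - r := by
            have := Finset.card_filter_add_card_filter_not
              (s := (Finset.univ : Finset (Fin n))) (p := fun i => d i ≠ 0)
            rw [← hsuppdef] at this  -- maybe unnecessary
            simp only [Finset.card_univ, Fintype.card_fin] at this
            omega
          have hprodχ : ∏ i ∈ supp, χ (t * d i) = χ t ^ r * χ P := by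
            rw [← map_prod, Finset.prod_mul_distrib, Finset.prod_const, hrsupp, _root_.map_mul,
              _root_.map_pow, hPdef]
          rw [hcard2, hrsupp, hprodχ]
          ring
  have htotal : (q : ℂ) * Z = (q : ℂ) ^ n +
      (∑ t ∈ Finset.univ.erase (0 : F), χ t ^ r) * ((q : ℂ) ^ (n - r) * (χ P * g ^ r)) := by
    rw [hcount, Finset.sum_comm, ← Finset.add_sum_erase _ _ (Finset.mem_univ (0 : F))]
    congr 1
    · simp [hq, Fintype.card_fun]
    · rw [Finset.sum_congr rfl (fun t ht => hS t (Finset.ne_of_mem_erase ht)), ← Finset.sum_mul]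
  have hqn : (q : ℂ) * (q : ℂ) ^ (n - 1) = (q : ℂ) ^ n := by
    rw [← pow_succ']
    congr 1
    omega
  rw [hpsi, hrho, hDelta]
  rcases Nat.even_or_odd r with hre | hro
  · -- even case
    have hsum : ∑ t ∈ Finset.univ.erase (0 : F), χ t ^ r = (q : ℂ) - 1 := by
      rw [Finset.sum_congr rfl (fun t ht => ?_), Finset.sum_const,
        Finset.card_erase_of_mem (Finset.mem_univ _), Finset.card_univ, hq, nsmul_eq_mul,
        mul_one, Nat.cast_sub hq0, Nat.cast_one]
      rcases hχpm t (Finset.ne_of_mem_erase ht) with h | h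
      · rw [h, one_pow]
      · rw [h, hre.neg_one_pow]
    have hcoef : ((1 + (-1 : ℂ) ^ r) / 2) = 1 := by
      rw [hre.neg_one_pow]; norm_num
    rw [hcoef]
    have hχm1 : χ (-1 : F) ^ r = 1 := by
      rcases hχpm (-1 : F) (neg_ne_zero.mpr one_ne_zero) with h | h
      · rw [h, one_pow]
      · rw [h, hre.neg_one_pow]
    have hg2r : g ^ r * g ^ r = (q : ℂ) ^ r := by
      rw [← pow_add, ← two_mul, pow_mul, hg2, mul_pow, hχm1, one_mul]
    have hkey : (q : ℂ) ^ (n - r) * g ^ r = (q : ℂ) ^ n * (g ^ r)⁻¹ := by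
      rw [eq_mul_inv_iff_mul_eq₀ (pow_ne_zero r hgne), mul_assoc, hg2r, ← pow_add]
      congr 1
      omega
    apply mul_left_cancel₀ hqC
    rw [htotal, hsum, _root_.zpow_neg, zpow_natCast]
    linear_combination ((q : ℂ) - 1) * χ P * hkey -
      (1 + ((q : ℂ) - 1) * χ P * (g ^ r)⁻¹) * hqn
  · -- odd case
    have hsum : ∑ t ∈ Finset.univ.erase (0 : F), χ t ^ r = 0 := by
      have hpt : ∀ t ∈ Finset.univ.erase (0 : F), χ t ^ r = χ t := by
        intro t ht
        rcases hχpm t (Finset.ne_of_mem_erase ht) with h | h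
        · rw [h, one_pow]
        · rw [h, hro.neg_one_pow]
      rw [Finset.sum_congr rfl hpt]
      have h0 : ∑ t : F, χ t = 0 := MulChar.sum_eq_zero_of_ne_one hχne
      rw [← Finset.add_sum_erase _ _ (Finset.mem_univ (0 : F)), hχ0, zero_add] at h0
      exact h0
    have hcoef : ((1 + (-1 : ℂ) ^ r) / 2) = 0 := by
      rw [hro.neg_one_pow]; norm_num
    rw [hcoef]
    simp only [zero_mul, add_zero]
    apply mul_left_cancel₀ hqC
    rw [htotal, hsum, zero_mul, add_zero, hqn]
end

section
/- With GF(q)^n realized as GF(q^n) and Q_α(ζ) = tr(αζ²): the Gram determinant of B_α(ξ,η) = tr(αξη) with respect to any GF(q)-basis ζ_1,…,ζ_n equals (det D)² N(α), where D = (ζ_i^{q^{j-1}}) and N is the field norm GF(q^n) → GF(q); moreover χ((det D)²) = (-1)^{n-1}, so Δ(Q_α) = (-1)^{n-1} X(α), where X is the quadratic character of GF(q^n)^×. -/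
open Matrix

/-- With `GF(q)^n` realized as `E = GF(q^n)` and `Q_α(ζ) = tr(α ζ²)`: for any `GF(q)`-basis
`ζ₁, …, ζₙ` of `E`, the Gram matrix of `B_α(ξ,η) = tr(α ξ η)` has determinant
`(det D)² N(α)`, where `D = (ζᵢ^{q^{j-1}})` is the Moore-type matrix and `N` the field norm;
moreover `χ((det D)²) = (-1)^{n-1}`, and hence
`Δ(Q_α) = χ(det Gram) = (-1)^{n-1} X(α)` for `α ≠ 0`, with `X` the quadratic character of
`GF(q^n)ˣ`. -/
theorem gram_det_and_Delta (q n : ℕ) (hn : 1 ≤ n) (F E : Type) [Field F] [Fintype F]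
    [DecidableEq F] [Field E] [Fintype E] [DecidableEq E] [Algebra F E]
    (hq : Fintype.card F = q) (hodd : Odd q) (hdim : Module.finrank F E = n)
    (ζ : Module.Basis (Fin n) F E) :
    (∀ α : E,
      algebraMap F E (Matrix.det (Matrix.of fun i j => Algebra.trace F E (α * ζ i * ζ j))) =
        (Matrix.det (Matrix.of fun i j : Fin n => ζ i ^ q ^ (j : ℕ))) ^ 2 *
          algebraMap F E (Algebra.norm F α)) ∧
    (∃ c : F, algebraMap F E c =
        (Matrix.det (Matrix.of fun i j : Fin n => ζ i ^ q ^ (j : ℕ))) ^ 2 ∧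
      quadraticChar F c = (-1) ^ (n - 1)) ∧
    (∀ α : E, α ≠ 0 →
      quadraticChar F (Matrix.det (Matrix.of fun i j => Algebra.trace F E (α * ζ i * ζ j))) =
        (-1) ^ (n - 1) * quadraticChar E α) := by
  classical
  have hinj : Function.Injective (algebraMap F E) := (algebraMap F E).injective
  have hcardE : Fintype.card E = q ^ n := by
    rw [Module.card_fintype ζ, hq, Fintype.card_fin]
  have hq2 : 2 ≤ q := hq ▸ Fintype.one_lt_card
  haveI : FiniteDimensional F E := Module.Finite.of_basis ζ
  obtain ⟨p, hpI⟩ := CharP.exists F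
  haveI := hpI
  haveI : CharP E p := charP_of_injective_algebraMap' (A := E) F p
  obtain ⟨m, hpp, hqm⟩ := FiniteField.card F p
  haveI : Fact p.Prime := ⟨hpp⟩
  rw [hq] at hqm
  -- the Frobenius as an F-algebra automorphism of E
  have hfrob_alg : ∀ c : F, (algebraMap F E c) ^ q = algebraMap F E c := by
    intro c
    rw [← map_pow]
    congr 1
    have := FiniteField.pow_card c
    rwa [hq] at this
  let f : E →ₐ[F] E :=
    { toFun := fun x => x ^ q
      map_one' := one_pow q
      map_mul' := fun x y => mul_pow x y q
      map_zero' := zero_pow (by omega)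
      map_add' := fun x y => by rw [hqm]; exact add_pow_char_pow x y p (m : ℕ)
      commutes' := hfrob_alg }
  have hfbij : Function.Bijective f :=
    Finite.injective_iff_bijective.mp (f.toRingHom.injective)
  let φ : E ≃ₐ[F] E := AlgEquiv.ofBijective f hfbij
  have hφ : ∀ x : E, φ x = x ^ q := fun x => rfl
  have hφpow : ∀ (k : ℕ) (x : E), (φ ^ k) x = x ^ q ^ k := by
    intro k
    induction k with
    | zero => intro x; simp
    | succ k ih =>
      intro x
      rw [pow_succ, AlgEquiv.mul_apply, hφ, ih, ← pow_mul, ← pow_succ']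
  -- powers of Frobenius are pairwise distinct
  obtain ⟨g, hg⟩ := IsCyclic.exists_generator (α := Eˣ)
  have hog : orderOf g = q ^ n - 1 := by
    rw [orderOf_eq_card_of_forall_mem_zpowers hg, Nat.card_eq_fintype_card, Fintype.card_units, hcardE]
  have hφinj : Function.Injective (fun k : Fin n => φ ^ (k : ℕ)) := by
    intro j k hjk
    have h1 : (g : E) ^ q ^ (j : ℕ) = (g : E) ^ q ^ (k : ℕ) := by
      have := congrArg (fun σ : E ≃ₐ[F] E => σ (g : E)) hjk
      simpa [hφpow] using this
    have h2 : g ^ q ^ (j : ℕ) = g ^ q ^ (k : ℕ) := by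
      ext; push_cast; exact h1
    rw [pow_eq_pow_iff_modEq, hog] at h2
    have hlt : ∀ i : Fin n, q ^ (i : ℕ) < q ^ n - 1 := by
      intro i
      have hi := i.isLt
      have hq3 : 3 ≤ q := by
        have := Nat.odd_iff.mp hodd
        omega
      have h1' : q ^ (i : ℕ) ≤ q ^ (n - 1) :=
        Nat.pow_le_pow_right (by omega) (by omega)
      have h2' : q ^ (n - 1) * 3 ≤ q ^ (n - 1) * q := Nat.mul_le_mul_left _ hq3
      have h3' : q ^ (n - 1) * q = q ^ n := by
        rw [← pow_succ]; congr 1; omega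
      have h4' : 1 ≤ q ^ (n - 1) := Nat.one_le_pow _ _ (by omega)
      omega
    have h3 : q ^ (j : ℕ) = q ^ (k : ℕ) := by
      have hj := hlt j
      have hk := hlt k
      unfold Nat.ModEq at h2
      rwa [Nat.mod_eq_of_lt hj, Nat.mod_eq_of_lt hk] at h2
    exact Fin.ext (Nat.pow_right_injective hq2 h3)
  have hcardAut : Fintype.card (E ≃ₐ[F] E) = n := by
    rw [← Nat.card_eq_fintype_card, IsGalois.card_aut_eq_finrank, hdim]
  have hφbij : Function.Bijective (fun k : Fin n => φ ^ (k : ℕ)) :=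
    (Fintype.bijective_iff_injective_and_card _).mpr
      ⟨hφinj, by rw [Fintype.card_fin, hcardAut]⟩
  let ψ : Fin n ≃ (E ≃ₐ[F] E) := Equiv.ofBijective _ hφbij
  have htr : ∀ x : E,
      algebraMap F E (Algebra.trace F E x) = ∑ k : Fin n, x ^ q ^ (k : ℕ) := by
    intro x
    rw [trace_eq_sum_automorphisms, ← Equiv.sum_comp ψ (fun σ : E ≃ₐ[F] E => σ x)]
    refine Finset.sum_congr rfl fun k _ => ?_
    show (φ ^ (k : ℕ)) x = x ^ q ^ (k : ℕ)
    exact hφpow _ x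
  have hnorm : ∀ x : E,
      algebraMap F E (Algebra.norm F x) = ∏ k : Fin n, x ^ q ^ (k : ℕ) := by
    intro x
    rw [Algebra.norm_eq_prod_automorphisms, ← Equiv.prod_comp ψ (fun σ : E ≃ₐ[F] E => σ x)]
    refine Finset.prod_congr rfl fun k _ => ?_
    show (φ ^ (k : ℕ)) x = x ^ q ^ (k : ℕ)
    exact hφpow _ x
  set D : Matrix (Fin n) (Fin n) E := Matrix.of fun i j : Fin n => ζ i ^ q ^ (j : ℕ) with hD
  set d : E := D.det with hd
  -- Part 1
  have part1 : ∀ α : E,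
      algebraMap F E (Matrix.det (Matrix.of fun i j => Algebra.trace F E (α * ζ i * ζ j))) =
        d ^ 2 * algebraMap F E (Algebra.norm F α) := by
    intro α
    have key : (Matrix.of fun i j => Algebra.trace F E (α * ζ i * ζ j)).map (algebraMap F E) =
        D * Matrix.diagonal (fun k : Fin n => α ^ q ^ (k : ℕ)) * Dᵀ := by
      ext i j
      rw [Matrix.map_apply, Matrix.of_apply, htr, Matrix.mul_apply]
      refine Finset.sum_congr rfl fun k _ => ?_
      rw [Matrix.mul_diagonal, Matrix.transpose_apply]
      show (α * ζ i * ζ j) ^ q ^ (k : ℕ) =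
        D i k * α ^ q ^ (k : ℕ) * D j k
      simp only [hD, Matrix.of_apply]
      rw [mul_pow, mul_pow]
      ring
    rw [RingHom.map_det, RingHom.mapMatrix_apply, key, Matrix.det_mul, Matrix.det_mul,
      Matrix.det_transpose, Matrix.det_diagonal, hnorm α]
    ring
  refine ⟨part1, ?_⟩
  -- characteristic facts
  have hq1 : q % 2 = 1 := Nat.odd_iff.mp hodd
  have hqn1 : q ^ n % 2 = 1 := Nat.odd_iff.mp (hodd.pow)
  have hF2 : ringChar F ≠ 2 := by
    intro h
    have := FiniteField.even_card_of_char_two h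
    rw [hq] at this; omega
  have hE2 : ringChar E ≠ 2 := by
    intro h
    have := FiniteField.even_card_of_char_two h
    rw [hcardE] at this; omega
  have hneg1 : (-1 : E) ≠ 1 := Ring.neg_one_ne_one_of_char_ne_two hE2
  -- the distinguished constant c
  set c : F := (Matrix.of fun i j => Algebra.trace F E (ζ i * ζ j)).det with hcdef
  have hc : algebraMap F E c = d ^ 2 := by
    have := part1 1
    simpa using this
  have hc0 : c ≠ 0 := by
    have heq : (Matrix.of fun i j => Algebra.trace F E (ζ i * ζ j)) =
        Algebra.traceMatrix F ζ := by
      ext i j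
      simp [Algebra.traceMatrix_apply, Algebra.traceForm_apply]
    rw [hcdef, heq, Algebra.traceMatrix_of_basis]
    exact det_traceForm_ne_zero ζ
  have hd0 : d ≠ 0 := by
    intro h
    apply hc0
    apply hinj
    rw [hc, h, map_zero]
    ring
  have hEpow : ∀ x : E, x ^ q ^ n = x := by
    intro x
    have := FiniteField.pow_card x
    rwa [hcardE] at this
  -- d^q = (-1)^(n-1) d
  have hdq : d ^ q = (-1 : E) ^ (n - 1) * d := by
    obtain ⟨m', rfl⟩ : ∃ m', n = m' + 1 := ⟨n - 1, by omega⟩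
    have h1 : d ^ q = (D.map f.toRingHom).det := by
      rw [← RingHom.mapMatrix_apply, ← RingHom.map_det]; rfl
    have hmap : D.map f.toRingHom = D.submatrix id (finRotate (m' + 1)) := by
      ext i j
      rw [Matrix.map_apply, Matrix.submatrix_apply, id_eq]
      show (ζ i ^ q ^ (j : ℕ)) ^ q = D i (finRotate (m' + 1) j)
      simp only [hD, Matrix.of_apply]
      rw [← pow_mul, ← pow_succ, coe_finRotate]
      rcases eq_or_ne j (Fin.last m') with rfl | hj
      · rw [if_pos rfl, pow_zero, pow_one, Fin.val_last]
        exact hEpow (ζ i)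
      · rw [if_neg hj]
    rw [h1, hmap, Matrix.det_permute', sign_finRotate]
    simp
    rfl
  have hdq1 : d ^ (q - 1) = (-1 : E) ^ (n - 1) := by
    have h1 : d ^ (q - 1) * d = (-1 : E) ^ (n - 1) * d := by
      rw [← pow_succ]
      have : q - 1 + 1 = q := by omega
      rw [this, hdq]
    exact mul_right_cancel₀ hd0 h1
  have hmapcpow : algebraMap F E (c ^ (q / 2)) = (-1 : E) ^ (n - 1) := by
    rw [map_pow, hc, ← pow_mul]
    have : 2 * (q / 2) = q - 1 := by omega
    rw [this, hdq1]
  have hχc : quadraticChar F c = (-1) ^ (n - 1) := by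
    rw [quadraticChar_eq_pow_of_char_ne_two hF2 hc0, hq]
    rcases Nat.even_or_odd (n - 1) with he | ho
    · have h1 : c ^ (q / 2) = 1 := by
        apply hinj
        rw [hmapcpow, Even.neg_one_pow he, RingHom.map_one]
      rw [if_pos h1, Even.neg_one_pow he]
    · have h1 : c ^ (q / 2) ≠ 1 := by
        intro h
        rw [h, RingHom.map_one, Odd.neg_one_pow ho] at hmapcpow
        exact hneg1 hmapcpow.symm
      rw [if_neg h1, Odd.neg_one_pow ho]
  refine ⟨⟨c, hc, hχc⟩, ?_⟩
  -- Part 3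
  -- geometric sum
  set s : ℕ := ∑ k : Fin n, q ^ (k : ℕ) with hsdef
  have hsgeom : s * (q - 1) = q ^ n - 1 := by
    have hZ : (s : ℤ) * ((q : ℤ) - 1) = (q : ℤ) ^ n - 1 := by
      have h0 := geom_sum_mul (q : ℤ) n
      rw [hsdef]
      push_cast
      rw [Fin.sum_univ_eq_sum_range (fun k => (q : ℤ) ^ k) n]
      exact h0
    have h1 : (1 : ℤ) ≤ (q : ℤ) ^ n := by
      exact_mod_cast Nat.one_le_pow n q (by omega)
    have h2 : ((s * (q - 1) : ℕ) : ℤ) = ((q ^ n - 1 : ℕ) : ℤ) := by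
      push_cast [Nat.cast_sub (by omega : 1 ≤ q), Nat.cast_sub (Nat.one_le_pow n q (by omega))]
      exact hZ
    exact_mod_cast h2
  have hs2 : s * (q / 2) = q ^ n / 2 := by
    have h1 : q - 1 = 2 * (q / 2) := by omega
    have h2 : q ^ n - 1 = 2 * (q ^ n / 2) := by omega
    have h3 : 2 * (s * (q / 2)) = 2 * (q ^ n / 2) := by
      rw [← h2, ← hsgeom, h1]; ring
    omega
  have hnormpow : ∀ α : E, algebraMap F E ((Algebra.norm F α) ^ (q / 2)) = α ^ (q ^ n / 2) := by
    intro α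
    rw [map_pow, hnorm α, Finset.prod_pow_eq_pow_sum, ← hsdef, ← pow_mul, hs2]
  intro α hα
  have hNα : Algebra.norm F α ≠ 0 := Algebra.norm_ne_zero_iff.mpr hα
  have hdet : (Matrix.of fun i j => Algebra.trace F E (α * ζ i * ζ j)).det =
      c * Algebra.norm F α := by
    apply hinj
    rw [_root_.map_mul, hc, part1 α]
  rw [hdet, _root_.map_mul, hχc]
  congr 1
  rw [quadraticChar_eq_pow_of_char_ne_two hF2 hNα, quadraticChar_eq_pow_of_char_ne_two hE2 hα,
    hq, hcardE]
  have hiff : (Algebra.norm F α) ^ (q / 2) = 1 ↔ α ^ (q ^ n / 2) = 1 := by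
    constructor
    · intro h; rw [← hnormpow α, h, RingHom.map_one]
    · intro h; apply hinj; rw [hnormpow α, h, RingHom.map_one]
  rw [if_congr hiff rfl rfl]
end
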